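/- arXiv:1811.11610 — 8 statements merged into one kernel-verified Lean document; each statement's English description precedes it below -/
import Mathlib

section
/- Let L₁, L₂, l, τ > 0. There exists a smooth vector field w : ℝ³ → ℝ³ that is horizontally periodic (with periods 2πL₁ and 2πL₂ in y₁ and y₂), divergence-free on all of ℝ³ (∂₁w₁ + ∂₂w₂ + ∂₃w₃ = 0), vanishes whenever y₃ lies outside some compact subset of the open interval (−l, τ), such that the trace y_h ↦ w₃(y_h, 0) is not identically zero and ∫_Q w₃(y_h, 0)² dy_h = max{L₁², L₂²} · ∫_Q |∇_h w₃(y_h, 0)|² dy_h, where ∇_h := (∂₁, ∂₂). -/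
open MeasureTheory Real



section helpers
variable {n : ℕ}

lemma proj_hasFDerivAt (i : Fin n) (y : Fin n → ℝ) :
    HasFDerivAt (fun z : Fin n → ℝ => z i)
      (ContinuousLinearMap.proj i : (Fin n → ℝ) →L[ℝ] ℝ) y :=
  hasFDerivAt_apply i y

lemma comp_proj_hasFDerivAt (i : Fin n) {u : ℝ → ℝ} {a : ℝ} {y : Fin n → ℝ}
    (hu : HasDerivAt u a (y i)) :
    HasFDerivAt (fun z : Fin n → ℝ => u (z i))
      (a • (ContinuousLinearMap.proj i : (Fin n → ℝ) →L[ℝ] ℝ)) y :=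
  hu.comp_hasFDerivAt y (proj_hasFDerivAt i y)

lemma hasDerivAt_cos_div (L x : ℝ) :
    HasDerivAt (fun t : ℝ => Real.cos (t / L)) (-Real.sin (x / L) * L⁻¹) x := by
  have h := (Real.hasDerivAt_cos (x / L)).comp x ((hasDerivAt_id x).div_const L)
  simpa [Function.comp_def, one_div] using h

lemma hasDerivAt_sin_div (L x : ℝ) :
    HasDerivAt (fun t : ℝ => Real.sin (t / L)) (Real.cos (x / L) * L⁻¹) x := by
  have h := (Real.hasDerivAt_sin (x / L)).comp x ((hasDerivAt_id x).div_const L)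
  simpa [Function.comp_def, one_div] using h

end helpers



lemma int_sin_sq (L : ℝ) (hL : 0 < L) :
    ∫ x in Set.Ioo (0:ℝ) (2*π*L), Real.sin (x / L) ^ 2 = π * L := by
  have h0 : (0:ℝ) ≤ 2*π*L := by positivity
  rw [← integral_Ioc_eq_integral_Ioo, ← intervalIntegral.integral_of_le h0,
    intervalIntegral.integral_comp_div (fun x => Real.sin x ^ 2) hL.ne']
  rw [zero_div, mul_div_assoc, div_self hL.ne', mul_one, integral_sin_sq]
  simp [Real.sin_two_pi, Real.cos_two_pi]
  ring

lemma int_cos_sq (L : ℝ) (hL : 0 < L) :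
    ∫ x in Set.Ioo (0:ℝ) (2*π*L), Real.cos (x / L) ^ 2 = π * L := by
  have h0 : (0:ℝ) ≤ 2*π*L := by positivity
  rw [← integral_Ioc_eq_integral_Ioo, ← intervalIntegral.integral_of_le h0,
    intervalIntegral.integral_comp_div (fun x => Real.cos x ^ 2) hL.ne']
  rw [zero_div, mul_div_assoc, div_self hL.ne', mul_one, integral_cos_sq]
  simp [Real.sin_two_pi, Real.cos_two_pi]
  ring


lemma rect_int0 (a b : ℝ) (hb : 0 ≤ b) (F : ℝ → ℝ) :
    ∫ yh in {yh : Fin 2 → ℝ | yh 0 ∈ Set.Ioo 0 a ∧ yh 1 ∈ Set.Ioo 0 b}, F (yh 0)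
      = (∫ x in Set.Ioo 0 a, F x) * b := by
  have hset : {yh : Fin 2 → ℝ | yh 0 ∈ Set.Ioo 0 a ∧ yh 1 ∈ Set.Ioo 0 b}
      = (MeasurableEquiv.finTwoArrow : (Fin 2 → ℝ) ≃ᵐ ℝ × ℝ) ⁻¹' (Set.Ioo 0 a ×ˢ Set.Ioo 0 b) := by
    ext yh; simp [MeasurableEquiv.finTwoArrow, Set.mem_prod]
  have key : (∫ yh in (MeasurableEquiv.finTwoArrow : (Fin 2 → ℝ) ≃ᵐ ℝ × ℝ) ⁻¹'
        (Set.Ioo 0 a ×ˢ Set.Ioo 0 b), F (yh 0))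
      = ∫ p in Set.Ioo 0 a ×ˢ Set.Ioo 0 b, F p.1 :=
    (volume_preserving_finTwoArrow ℝ).setIntegral_preimage_emb
      (MeasurableEquiv.measurableEmbedding _) (fun p => F p.1) _
  rw [hset, key, Measure.volume_eq_prod]
  have := MeasureTheory.setIntegral_prod_mul (μ := (volume : Measure ℝ)) (ν := (volume : Measure ℝ))
      F (fun _ => (1:ℝ)) (Set.Ioo 0 a) (Set.Ioo 0 b)
  simp only [mul_one] at this
  rw [this]
  simp [Real.volume_Ioo, ENNReal.toReal_ofReal hb, hb]

lemma rect_int1 (a b : ℝ) (ha : 0 ≤ a) (F : ℝ → ℝ) :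
    ∫ yh in {yh : Fin 2 → ℝ | yh 0 ∈ Set.Ioo 0 a ∧ yh 1 ∈ Set.Ioo 0 b}, F (yh 1)
      = (∫ x in Set.Ioo 0 b, F x) * a := by
  have hset : {yh : Fin 2 → ℝ | yh 0 ∈ Set.Ioo 0 a ∧ yh 1 ∈ Set.Ioo 0 b}
      = (MeasurableEquiv.finTwoArrow : (Fin 2 → ℝ) ≃ᵐ ℝ × ℝ) ⁻¹' (Set.Ioo 0 a ×ˢ Set.Ioo 0 b) := by
    ext yh; simp [MeasurableEquiv.finTwoArrow, Set.mem_prod]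
  have key : (∫ yh in (MeasurableEquiv.finTwoArrow : (Fin 2 → ℝ) ≃ᵐ ℝ × ℝ) ⁻¹'
        (Set.Ioo 0 a ×ˢ Set.Ioo 0 b), F (yh 1))
      = ∫ p in Set.Ioo 0 a ×ˢ Set.Ioo 0 b, F p.2 :=
    (volume_preserving_finTwoArrow ℝ).setIntegral_preimage_emb
      (MeasurableEquiv.measurableEmbedding _) (fun p => F p.2) _
  rw [hset, key, Measure.volume_eq_prod]
  have := MeasureTheory.setIntegral_prod_mul (μ := (volume : Measure ℝ)) (ν := (volume : Measure ℝ))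
      (fun _ => (1:ℝ)) F (Set.Ioo 0 a) (Set.Ioo 0 b)
  simp only [one_mul] at this
  rw [this, mul_comm]
  congr 1
  simp [Real.volume_Ioo, ENNReal.toReal_ofReal ha, ha]

lemma case1 (L₁ L₂ l τ : ℝ) (hL₁ : 0 < L₁) (hL₂ : 0 < L₂) (hl : 0 < l) (hτ : 0 < τ)
    (hLe : L₂ ≤ L₁) :
    ∃ w : (Fin 3 → ℝ) → (Fin 3 → ℝ),
      ContDiff ℝ (⊤ : ℕ∞) w ∧
      (∀ y, w (y + Pi.single 0 (2 * π * L₁)) = w y) ∧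
      (∀ y, w (y + Pi.single 1 (2 * π * L₂)) = w y) ∧
      (∀ y, (∑ i : Fin 3, fderiv ℝ (fun z => w z i) y (Pi.single i 1)) = 0) ∧
      (∃ K : Set ℝ, IsCompact K ∧ K ⊆ Set.Ioo (-l) τ ∧
        ∀ y : Fin 3 → ℝ, y 2 ∉ K → w y = 0) ∧
      (∃ yh : Fin 2 → ℝ, w ![yh 0, yh 1, 0] 2 ≠ 0) ∧
      (∫ yh in {yh : Fin 2 → ℝ | yh 0 ∈ Set.Ioo 0 (2 * π * L₁) ∧
            yh 1 ∈ Set.Ioo 0 (2 * π * L₂)},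
          (w ![yh 0, yh 1, 0] 2) ^ 2)
        = max (L₁ ^ 2) (L₂ ^ 2) *
          ∫ yh in {yh : Fin 2 → ℝ | yh 0 ∈ Set.Ioo 0 (2 * π * L₁) ∧
              yh 1 ∈ Set.Ioo 0 (2 * π * L₂)},
            ((fderiv ℝ (fun z : Fin 2 → ℝ => w ![z 0, z 1, 0] 2) yh (Pi.single 0 1)) ^ 2 +
             (fderiv ℝ (fun z : Fin 2 → ℝ => w ![z 0, z 1, 0] 2) yh (Pi.single 1 1)) ^ 2) := by
  have hr : 0 < min l τ := lt_min hl hτ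
  set r := min l τ with hrdef
  let f : ContDiffBump (0:ℝ) := ⟨r/4, r/2, by positivity, by linarith⟩
  set ψ : ℝ → ℝ := ⇑f with hψdef
  have hψc : ContDiff ℝ (⊤:ℕ∞) ψ := f.contDiff
  have hψpair := contDiff_infty_iff_deriv.mp hψc
  set W : (Fin 3 → ℝ) → (Fin 3 → ℝ) :=
    fun y => ![deriv ψ (y 2) * Real.cos (y 0 / L₁), 0,
               L₁⁻¹ * (ψ (y 2) * Real.sin (y 0 / L₁))] with hW
  have hproj : ∀ (i : Fin 3), ContDiff ℝ (⊤:ℕ∞) (fun y : Fin 3 → ℝ => y i) :=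
    fun i => contDiff_pi.mp contDiff_id i
  refine ⟨W, ?_, ?_, ?_, ?_, ?_, ?_, ?_⟩
  · -- smoothness
    rw [contDiff_pi]
    intro i
    fin_cases i
    · exact (hψpair.2.comp (hproj 2)).mul (((hproj 0).div_const L₁).cos)
    · exact contDiff_const
    · exact contDiff_const.mul ((hψc.comp (hproj 2)).mul (((hproj 0).div_const L₁).sin))
  · -- periodicity 1
    intro y
    have h0 : ((y + Pi.single 0 (2*π*L₁) : Fin 3 → ℝ)) 0 = y 0 + 2*π*L₁ := by simp
    have h2 : ((y + Pi.single 0 (2*π*L₁) : Fin 3 → ℝ)) 2 = y 2 := by simp [Pi.single_apply]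
    have harg : (y 0 + 2*π*L₁) / L₁ = y 0 / L₁ + 2*π := by field_simp
    simp only [hW, h0, h2, harg, Real.cos_add_two_pi, Real.sin_add_two_pi]
  · -- periodicity 2
    intro y
    have h0 : ((y + Pi.single 1 (2*π*L₂) : Fin 3 → ℝ)) 0 = y 0 := by simp [Pi.single_apply]
    have h2 : ((y + Pi.single 1 (2*π*L₂) : Fin 3 → ℝ)) 2 = y 2 := by simp [Pi.single_apply]
    simp only [hW, h0, h2]
  · -- divergence free
    intro y
    rw [Fin.sum_univ_three]
    have hdd : HasDerivAt (deriv ψ) (deriv (deriv ψ) (y 2)) (y 2) :=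
      ((hψpair.2.differentiable (by simp)) (y 2)).hasDerivAt
    have hψat : HasDerivAt ψ (deriv ψ (y 2)) (y 2) := (hψpair.1 (y 2)).hasDerivAt
    have hA := comp_proj_hasFDerivAt (2:Fin 3) hdd
    have hB := comp_proj_hasFDerivAt (0:Fin 3) (hasDerivAt_cos_div L₁ (y 0))
    have hC := comp_proj_hasFDerivAt (2:Fin 3) hψat
    have hD := comp_proj_hasFDerivAt (0:Fin 3) (hasDerivAt_sin_div L₁ (y 0))
    have h0 := hA.fun_mul hB
    have h2 := (hC.fun_mul hD).const_mul L₁⁻¹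
    have e0 : (fun z : Fin 3 → ℝ => W z 0) = fun z => deriv ψ (z 2) * Real.cos (z 0 / L₁) := rfl
    have e1 : (fun z : Fin 3 → ℝ => W z 1) = fun _ => (0:ℝ) := rfl
    have e2 : (fun z : Fin 3 → ℝ => W z 2) = fun z => L₁⁻¹ * (ψ (z 2) * Real.sin (z 0 / L₁)) := rfl
    rw [e0, e1, e2, h0.fderiv, h2.fderiv, fderiv_fun_const]
    simp only [ContinuousLinearMap.add_apply, ContinuousLinearMap.smul_apply,
      ContinuousLinearMap.proj_apply, Pi.single_eq_same, smul_eq_mul,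
      Pi.zero_apply, ContinuousLinearMap.zero_apply,
      Pi.single_eq_of_ne (show (0:Fin 3) ≠ 2 by decide),
      Pi.single_eq_of_ne (show (2:Fin 3) ≠ 0 by decide)]
    ring
  · -- support
    refine ⟨Set.Icc (-(r/2)) (r/2), isCompact_Icc, ?_, ?_⟩
    · intro x hx
      have h1 := min_le_left l τ
      have h2 := min_le_right l τ
      obtain ⟨ha, hb⟩ := hx
      constructor <;> [skip; skip] <;> nlinarith
    · intro y hy
      have hsupp : Function.support ψ ⊆ Set.Icc (-(r/2)) (r/2) := by
        rw [hψdef, f.support_eq]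
        simp only [Real.ball_eq_Ioo, zero_sub, zero_add]
        exact Set.Ioo_subset_Icc_self
      have hψ0 : ψ (y 2) = 0 := by
        by_contra h
        exact hy (hsupp (Function.mem_support.mpr h))
      have hd0 : deriv ψ (y 2) = 0 := by
        have hopen : IsOpen (Set.Icc (-(r/2)) (r/2) : Set ℝ)ᶜ := isClosed_Icc.isOpen_compl
        have hev : ψ =ᶠ[nhds (y 2)] (fun _ => (0:ℝ)) := by
          filter_upwards [hopen.mem_nhds hy] with x hx
          by_contra h
          exact hx (hsupp (Function.mem_support.mpr h))
        rw [hev.deriv_eq, deriv_const]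
      funext i
      fin_cases i <;> simp [hW, hψ0, hd0]
  · -- nontrivial
    refine ⟨![L₁ * (π/2), 0], ?_⟩
    have hψ1 : ψ 0 = 1 := f.one_of_mem_closedBall (by
      simp only [Metric.mem_closedBall, dist_self]; positivity)
    simp only [hW, Matrix.cons_val_zero, Matrix.cons_val_one, Matrix.head_cons,
      Matrix.cons_val_two, Matrix.tail_cons, hψ1, one_mul]
    rw [mul_div_cancel_left₀ _ hL₁.ne', Real.sin_pi_div_two, mul_one]
    exact inv_ne_zero hL₁.ne'
  · -- integral identity
    have hψ1 : ψ 0 = 1 := f.one_of_mem_closedBall (by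
      simp only [Metric.mem_closedBall, dist_self]; positivity)
    have htr : ∀ z : Fin 2 → ℝ, W ![z 0, z 1, 0] 2 = L₁⁻¹ * Real.sin (z 0 / L₁) := by
      intro z
      show L₁⁻¹ * (ψ ((![z 0, z 1, 0] : Fin 3 → ℝ) 2) * Real.sin ((![z 0, z 1, 0] : Fin 3 → ℝ) 0 / L₁)) = _
      simp [hψ1]
    have hfd : ∀ yh : Fin 2 → ℝ, HasFDerivAt (fun z : Fin 2 → ℝ => L₁⁻¹ * Real.sin (z 0 / L₁))
        (L₁⁻¹ • ((Real.cos (yh 0 / L₁) * L₁⁻¹) •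
          (ContinuousLinearMap.proj 0 : (Fin 2 → ℝ) →L[ℝ] ℝ))) yh :=
      fun yh => (comp_proj_hasFDerivAt (0 : Fin 2) (hasDerivAt_sin_div L₁ (yh 0))).const_mul L₁⁻¹
    have he0 : ∀ yh : Fin 2 → ℝ, fderiv ℝ (fun z : Fin 2 → ℝ => L₁⁻¹ * Real.sin (z 0 / L₁)) yh
        (Pi.single 0 1) = L₁⁻¹ * (Real.cos (yh 0 / L₁) * L₁⁻¹) := by
      intro yh
      rw [(hfd yh).fderiv]
      simp [Pi.single_eq_same]
    have he1 : ∀ yh : Fin 2 → ℝ, fderiv ℝ (fun z : Fin 2 → ℝ => L₁⁻¹ * Real.sin (z 0 / L₁)) yh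
        (Pi.single 1 1) = 0 := by
      intro yh
      rw [(hfd yh).fderiv]
      simp [Pi.single_eq_of_ne (show (0:Fin 2) ≠ 1 by decide)]
    simp only [htr, he0, he1]
    have hre : ∀ x : ℝ, (L₁⁻¹ * Real.sin (x / L₁))^2 = (L₁⁻¹)^2 * Real.sin (x/L₁)^2 := by
      intro x; ring
    have hre2 : ∀ x : ℝ, (L₁⁻¹ * (Real.cos (x / L₁) * L₁⁻¹))^2 + (0:ℝ)^2
        = ((L₁⁻¹)^2*(L₁⁻¹)^2) * Real.cos (x/L₁)^2 := by
      intro x; ring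
    simp only [hre, hre2]
    have l1 := rect_int0 (2*π*L₁) (2*π*L₂) (by positivity)
      (fun x => (L₁⁻¹)^2 * Real.sin (x/L₁)^2)
    have l2 := rect_int0 (2*π*L₁) (2*π*L₂) (by positivity)
      (fun x => ((L₁⁻¹)^2*(L₁⁻¹)^2) * Real.cos (x/L₁)^2)
    beta_reduce at l1 l2
    rw [l1, l2, MeasureTheory.integral_const_mul, MeasureTheory.integral_const_mul,
      int_sin_sq L₁ hL₁, int_cos_sq L₁ hL₁,
      max_eq_left (by nlinarith : L₂^2 ≤ L₁^2)]
    field_simp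

lemma case2 (L₁ L₂ l τ : ℝ) (hL₁ : 0 < L₁) (hL₂ : 0 < L₂) (hl : 0 < l) (hτ : 0 < τ)
    (hLe : L₁ ≤ L₂) :
    ∃ w : (Fin 3 → ℝ) → (Fin 3 → ℝ),
      ContDiff ℝ (⊤ : ℕ∞) w ∧
      (∀ y, w (y + Pi.single 0 (2 * π * L₁)) = w y) ∧
      (∀ y, w (y + Pi.single 1 (2 * π * L₂)) = w y) ∧
      (∀ y, (∑ i : Fin 3, fderiv ℝ (fun z => w z i) y (Pi.single i 1)) = 0) ∧
      (∃ K : Set ℝ, IsCompact K ∧ K ⊆ Set.Ioo (-l) τ ∧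
        ∀ y : Fin 3 → ℝ, y 2 ∉ K → w y = 0) ∧
      (∃ yh : Fin 2 → ℝ, w ![yh 0, yh 1, 0] 2 ≠ 0) ∧
      (∫ yh in {yh : Fin 2 → ℝ | yh 0 ∈ Set.Ioo 0 (2 * π * L₁) ∧
            yh 1 ∈ Set.Ioo 0 (2 * π * L₂)},
          (w ![yh 0, yh 1, 0] 2) ^ 2)
        = max (L₁ ^ 2) (L₂ ^ 2) *
          ∫ yh in {yh : Fin 2 → ℝ | yh 0 ∈ Set.Ioo 0 (2 * π * L₁) ∧
              yh 1 ∈ Set.Ioo 0 (2 * π * L₂)},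
            ((fderiv ℝ (fun z : Fin 2 → ℝ => w ![z 0, z 1, 0] 2) yh (Pi.single 0 1)) ^ 2 +
             (fderiv ℝ (fun z : Fin 2 → ℝ => w ![z 0, z 1, 0] 2) yh (Pi.single 1 1)) ^ 2) := by
  have hr : 0 < min l τ := lt_min hl hτ
  set r := min l τ with hrdef
  let f : ContDiffBump (0:ℝ) := ⟨r/4, r/2, by positivity, by linarith⟩
  set ψ : ℝ → ℝ := ⇑f with hψdef
  have hψc : ContDiff ℝ (⊤:ℕ∞) ψ := f.contDiff
  have hψpair := contDiff_infty_iff_deriv.mp hψc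
  set W : (Fin 3 → ℝ) → (Fin 3 → ℝ) :=
    fun y => ![0, deriv ψ (y 2) * Real.cos (y 1 / L₂),
               L₂⁻¹ * (ψ (y 2) * Real.sin (y 1 / L₂))] with hW
  have hproj : ∀ (i : Fin 3), ContDiff ℝ (⊤:ℕ∞) (fun y : Fin 3 → ℝ => y i) :=
    fun i => contDiff_pi.mp contDiff_id i
  refine ⟨W, ?_, ?_, ?_, ?_, ?_, ?_, ?_⟩
  · -- smoothness
    rw [contDiff_pi]
    intro i
    fin_cases i
    · exact contDiff_const
    · exact (hψpair.2.comp (hproj 2)).mul (((hproj 1).div_const L₂).cos)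
    · exact contDiff_const.mul ((hψc.comp (hproj 2)).mul (((hproj 1).div_const L₂).sin))
  · -- periodicity 1
    intro y
    have h1 : ((y + Pi.single 0 (2*π*L₁) : Fin 3 → ℝ)) 1 = y 1 := by simp [Pi.single_apply]
    have h2 : ((y + Pi.single 0 (2*π*L₁) : Fin 3 → ℝ)) 2 = y 2 := by simp [Pi.single_apply]
    simp only [hW, h1, h2]
  · -- periodicity 2
    intro y
    have h1 : ((y + Pi.single 1 (2*π*L₂) : Fin 3 → ℝ)) 1 = y 1 + 2*π*L₂ := by simp
    have h2 : ((y + Pi.single 1 (2*π*L₂) : Fin 3 → ℝ)) 2 = y 2 := by simp [Pi.single_apply]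
    have harg : (y 1 + 2*π*L₂) / L₂ = y 1 / L₂ + 2*π := by field_simp
    simp only [hW, h1, h2, harg, Real.cos_add_two_pi, Real.sin_add_two_pi]
  · -- divergence free
    intro y
    rw [Fin.sum_univ_three]
    have hdd : HasDerivAt (deriv ψ) (deriv (deriv ψ) (y 2)) (y 2) :=
      ((hψpair.2.differentiable (by simp)) (y 2)).hasDerivAt
    have hψat : HasDerivAt ψ (deriv ψ (y 2)) (y 2) := (hψpair.1 (y 2)).hasDerivAt
    have hA := comp_proj_hasFDerivAt (2:Fin 3) hdd
    have hB := comp_proj_hasFDerivAt (1:Fin 3) (hasDerivAt_cos_div L₂ (y 1))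
    have hC := comp_proj_hasFDerivAt (2:Fin 3) hψat
    have hD := comp_proj_hasFDerivAt (1:Fin 3) (hasDerivAt_sin_div L₂ (y 1))
    have h1 := hA.fun_mul hB
    have h2 := (hC.fun_mul hD).const_mul L₂⁻¹
    have e0 : (fun z : Fin 3 → ℝ => W z 0) = fun _ => (0:ℝ) := rfl
    have e1 : (fun z : Fin 3 → ℝ => W z 1) = fun z => deriv ψ (z 2) * Real.cos (z 1 / L₂) := rfl
    have e2 : (fun z : Fin 3 → ℝ => W z 2) = fun z => L₂⁻¹ * (ψ (z 2) * Real.sin (z 1 / L₂)) := rfl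
    rw [e0, e1, e2, h1.fderiv, h2.fderiv, fderiv_fun_const]
    simp only [ContinuousLinearMap.add_apply, ContinuousLinearMap.smul_apply,
      ContinuousLinearMap.proj_apply, Pi.single_eq_same, smul_eq_mul,
      Pi.zero_apply, ContinuousLinearMap.zero_apply,
      Pi.single_eq_of_ne (show (1:Fin 3) ≠ 2 by decide),
      Pi.single_eq_of_ne (show (2:Fin 3) ≠ 1 by decide)]
    ring
  · -- support
    refine ⟨Set.Icc (-(r/2)) (r/2), isCompact_Icc, ?_, ?_⟩
    · intro x hx
      have h1 := min_le_left l τ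
      have h2 := min_le_right l τ
      obtain ⟨ha, hb⟩ := hx
      constructor <;> [skip; skip] <;> nlinarith
    · intro y hy
      have hsupp : Function.support ψ ⊆ Set.Icc (-(r/2)) (r/2) := by
        rw [hψdef, f.support_eq]
        simp only [Real.ball_eq_Ioo, zero_sub, zero_add]
        exact Set.Ioo_subset_Icc_self
      have hψ0 : ψ (y 2) = 0 := by
        by_contra h
        exact hy (hsupp (Function.mem_support.mpr h))
      have hd0 : deriv ψ (y 2) = 0 := by
        have hopen : IsOpen (Set.Icc (-(r/2)) (r/2) : Set ℝ)ᶜ := isClosed_Icc.isOpen_compl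
        have hev : ψ =ᶠ[nhds (y 2)] (fun _ => (0:ℝ)) := by
          filter_upwards [hopen.mem_nhds hy] with x hx
          by_contra h
          exact hx (hsupp (Function.mem_support.mpr h))
        rw [hev.deriv_eq, deriv_const]
      funext i
      fin_cases i <;> simp [hW, hψ0, hd0]
  · -- nontrivial
    refine ⟨![0, L₂ * (π/2)], ?_⟩
    have hψ1 : ψ 0 = 1 := f.one_of_mem_closedBall (by
      simp only [Metric.mem_closedBall, dist_self]; positivity)
    simp only [hW, Matrix.cons_val_zero, Matrix.cons_val_one, Matrix.head_cons,
      Matrix.cons_val_two, Matrix.tail_cons, hψ1, one_mul]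
    rw [mul_div_cancel_left₀ _ hL₂.ne', Real.sin_pi_div_two, mul_one]
    exact inv_ne_zero hL₂.ne'
  · -- integral identity
    have hψ1 : ψ 0 = 1 := f.one_of_mem_closedBall (by
      simp only [Metric.mem_closedBall, dist_self]; positivity)
    have htr : ∀ z : Fin 2 → ℝ, W ![z 0, z 1, 0] 2 = L₂⁻¹ * Real.sin (z 1 / L₂) := by
      intro z
      show L₂⁻¹ * (ψ ((![z 0, z 1, 0] : Fin 3 → ℝ) 2) * Real.sin ((![z 0, z 1, 0] : Fin 3 → ℝ) 1 / L₂)) = _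
      simp [hψ1]
    have hfd : ∀ yh : Fin 2 → ℝ, HasFDerivAt (fun z : Fin 2 → ℝ => L₂⁻¹ * Real.sin (z 1 / L₂))
        (L₂⁻¹ • ((Real.cos (yh 1 / L₂) * L₂⁻¹) •
          (ContinuousLinearMap.proj 1 : (Fin 2 → ℝ) →L[ℝ] ℝ))) yh :=
      fun yh => (comp_proj_hasFDerivAt (1 : Fin 2) (hasDerivAt_sin_div L₂ (yh 1))).const_mul L₂⁻¹
    have he0 : ∀ yh : Fin 2 → ℝ, fderiv ℝ (fun z : Fin 2 → ℝ => L₂⁻¹ * Real.sin (z 1 / L₂)) yh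
        (Pi.single 0 1) = 0 := by
      intro yh
      rw [(hfd yh).fderiv]
      simp [Pi.single_eq_of_ne (show (1:Fin 2) ≠ 0 by decide)]
    have he1 : ∀ yh : Fin 2 → ℝ, fderiv ℝ (fun z : Fin 2 → ℝ => L₂⁻¹ * Real.sin (z 1 / L₂)) yh
        (Pi.single 1 1) = L₂⁻¹ * (Real.cos (yh 1 / L₂) * L₂⁻¹) := by
      intro yh
      rw [(hfd yh).fderiv]
      simp [Pi.single_eq_same]
    simp only [htr, he0, he1]
    have hre : ∀ x : ℝ, (L₂⁻¹ * Real.sin (x / L₂))^2 = (L₂⁻¹)^2 * Real.sin (x/L₂)^2 := by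
      intro x; ring
    have hre2 : ∀ x : ℝ, (0:ℝ)^2 + (L₂⁻¹ * (Real.cos (x / L₂) * L₂⁻¹))^2
        = ((L₂⁻¹)^2*(L₂⁻¹)^2) * Real.cos (x/L₂)^2 := by
      intro x; ring
    simp only [hre, hre2]
    have l1 := rect_int1 (2*π*L₁) (2*π*L₂) (by positivity)
      (fun x => (L₂⁻¹)^2 * Real.sin (x/L₂)^2)
    have l2 := rect_int1 (2*π*L₁) (2*π*L₂) (by positivity)
      (fun x => ((L₂⁻¹)^2*(L₂⁻¹)^2) * Real.cos (x/L₂)^2)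
    beta_reduce at l1 l2
    rw [l1, l2, MeasureTheory.integral_const_mul, MeasureTheory.integral_const_mul,
      int_sin_sq L₂ hL₂, int_cos_sq L₂ hL₂,
      max_eq_right (by nlinarith : L₁^2 ≤ L₂^2)]
    field_simp


/-- Attainment half of the sharp constant `max{L₁², L₂²}`: there exists a smooth,
horizontally periodic, divergence-free vector field `w` on `ℝ³`, vanishing for `y₃`
outside a compact subset of `(-l, τ)`, whose interface trace `w₃(·, 0)` is nontrivial
and realizes equality `∫_Q w₃(y_h,0)² = max{L₁², L₂²} ∫_Q |∇_h w₃(y_h,0)|²`. -/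
theorem stmt_1 (L₁ L₂ l τ : ℝ) (hL₁ : 0 < L₁) (hL₂ : 0 < L₂) (hl : 0 < l) (hτ : 0 < τ) :
    ∃ w : (Fin 3 → ℝ) → (Fin 3 → ℝ),
      ContDiff ℝ (⊤ : ℕ∞) w ∧
      (∀ y, w (y + Pi.single 0 (2 * π * L₁)) = w y) ∧
      (∀ y, w (y + Pi.single 1 (2 * π * L₂)) = w y) ∧
      (∀ y, (∑ i : Fin 3, fderiv ℝ (fun z => w z i) y (Pi.single i 1)) = 0) ∧
      (∃ K : Set ℝ, IsCompact K ∧ K ⊆ Set.Ioo (-l) τ ∧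
        ∀ y : Fin 3 → ℝ, y 2 ∉ K → w y = 0) ∧
      (∃ yh : Fin 2 → ℝ, w ![yh 0, yh 1, 0] 2 ≠ 0) ∧
      (∫ yh in {yh : Fin 2 → ℝ | yh 0 ∈ Set.Ioo 0 (2 * π * L₁) ∧
            yh 1 ∈ Set.Ioo 0 (2 * π * L₂)},
          (w ![yh 0, yh 1, 0] 2) ^ 2)
        = max (L₁ ^ 2) (L₂ ^ 2) *
          ∫ yh in {yh : Fin 2 → ℝ | yh 0 ∈ Set.Ioo 0 (2 * π * L₁) ∧
              yh 1 ∈ Set.Ioo 0 (2 * π * L₂)},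
            ((fderiv ℝ (fun z : Fin 2 → ℝ => w ![z 0, z 1, 0] 2) yh (Pi.single 0 1)) ^ 2 +
             (fderiv ℝ (fun z : Fin 2 → ℝ => w ![z 0, z 1, 0] 2) yh (Pi.single 1 1)) ^ 2) := by
  rcases le_total L₂ L₁ with h | h
  · exact case1 L₁ L₂ l τ hL₁ hL₂ hl hτ h
  · exact case2 L₁ L₂ l τ hL₁ hL₂ hl hτ h
end

section
/- Let L₁, L₂, l, τ > 0, let M̄ = (M̄₁, M̄₂, 0) ∈ ℝ³ be a nonzero vector with vanishing third component, and let a > 0. Then there exists a smooth vector field w : ℝ³ → ℝ³ that is horizontally periodic (with periods 2πL₁ and 2πL₂ in y₁ and y₂), divergence-free on ℝ³, vanishes whenever y₃ lies outside some compact subset of (−l, τ), whose trace y_h ↦ w₃(y_h, 0) is not identically zero, and which satisfies ∫_{Q×(−l,τ)} |M̄₁ ∂₁w(y) + M̄₂ ∂₂w(y)|² dy < a · ∫_Q |w₃(y_h, 0)|² dy_h. -/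
open MeasureTheory Real

theorem dirichlet_aux (u v ε : ℝ) (hε : 0 < ε) :
    ∃ p q : ℤ, ¬(p = 0 ∧ q = 0) ∧ |(p : ℝ) * u + (q : ℝ) * v| < ε := by
  by_cases hu : u = 0
  · exact ⟨1, 0, by simp, by simp [hu, hε]⟩
  · obtain ⟨n, hn⟩ := exists_nat_gt (|u| / ε)
    have hn1 : 0 < n + 1 := Nat.succ_pos n
    obtain ⟨j, k, hk0, _, hjk⟩ := Real.exists_int_int_abs_mul_sub_le (v / u) hn1
    refine ⟨-j, k, fun h => by simp [h.2] at hk0, ?_⟩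
    have hjk' : |(k : ℝ) * (v / u) - j| ≤ 1 / ((n : ℝ) + 2) := by
      have h := hjk
      push_cast at h
      have h2 : ((n : ℝ) + 1 + 1) = (n : ℝ) + 2 := by ring
      rwa [h2] at h
    have habs : |(-j : ℤ) * u + (k : ℝ) * v| = |u| * |(k : ℝ) * (v / u) - j| := by
      rw [← abs_mul]
      congr 1
      field_simp
      push_cast
      ring
    rw [habs]
    have h1 : |u| * |(k : ℝ) * (v / u) - j| ≤ |u| * (1 / ((n : ℝ) + 2)) :=
      mul_le_mul_of_nonneg_left hjk' (abs_nonneg u)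
    have h2 : |u| * (1 / ((n : ℝ) + 2)) < ε := by
      rw [mul_one_div, div_lt_iff₀ (by positivity)]
      have h3 : |u| / ε < (n : ℝ) + 2 := lt_trans hn (by linarith)
      calc |u| = (|u| / ε) * ε := by field_simp
        _ < ((n : ℝ) + 2) * ε := mul_lt_mul_of_pos_right h3 hε
        _ = ε * ((n : ℝ) + 2) := by ring
    linarith

theorem fderiv_mul_trig_aux (a b : ℝ → ℝ) (ha : Differentiable ℝ a) (hb : Differentiable ℝ b)
    (c₁ c₂ : ℝ) (y v : Fin 3 → ℝ) :
    fderiv ℝ (fun z : Fin 3 → ℝ => a (z 2) * b (c₁ * z 0 + c₂ * z 1)) y v =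
      a (y 2) * deriv b (c₁ * y 0 + c₂ * y 1) * (c₁ * v 0 + c₂ * v 1)
        + b (c₁ * y 0 + c₂ * y 1) * deriv a (y 2) * v 2 := by
  set Φ : (Fin 3 → ℝ) →L[ℝ] ℝ :=
    c₁ • ContinuousLinearMap.proj 0 + c₂ • ContinuousLinearMap.proj 1 with hΦdef
  have hΦfun : ⇑Φ = fun z : Fin 3 → ℝ => c₁ * z 0 + c₂ * z 1 := by
    funext z
    simp [hΦdef, smul_eq_mul]
  have hΦ : HasFDerivAt (fun z : Fin 3 → ℝ => c₁ * z 0 + c₂ * z 1) Φ y := by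
    rw [← hΦfun]; exact Φ.hasFDerivAt
  have hP2 : HasFDerivAt (fun z : Fin 3 → ℝ => z 2)
      (ContinuousLinearMap.proj (R := ℝ) (φ := fun _ : Fin 3 => ℝ) 2) y :=
    (ContinuousLinearMap.proj (R := ℝ) (φ := fun _ : Fin 3 => ℝ) 2).hasFDerivAt
  have Ha : HasFDerivAt (fun z : Fin 3 → ℝ => a (z 2))
      (deriv a (y 2) • ContinuousLinearMap.proj (R := ℝ) (φ := fun _ : Fin 3 => ℝ) 2) y :=
    (ha (y 2)).hasDerivAt.comp_hasFDerivAt y hP2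
  have Hb : HasFDerivAt (fun z : Fin 3 → ℝ => b (c₁ * z 0 + c₂ * z 1))
      (deriv b (c₁ * y 0 + c₂ * y 1) • Φ) y :=
    (hb (c₁ * y 0 + c₂ * y 1)).hasDerivAt.comp_hasFDerivAt y hΦ
  have H := Ha.mul Hb
  rw [show (fun z : Fin 3 → ℝ => a (z 2) * b (c₁ * z 0 + c₂ * z 1)) = (fun z => a (z 2)) * (fun z => b (c₁ * z 0 + c₂ * z 1)) from rfl, H.fderiv]
  simp [hΦdef, smul_eq_mul]
  ring

theorem integral_cos_sq_period (L : ℝ) (hL : 0 < L) (n : ℤ) (hn : n ≠ 0) (d : ℝ) :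
    ∫ x in Set.Ioo (0 : ℝ) (2 * π * L), Real.cos ((n / L) * x + d) ^ 2 = π * L := by
  have hc : ((n : ℝ) / L) ≠ 0 := div_ne_zero (Int.cast_ne_zero.mpr hn) hL.ne'
  have hle : (0 : ℝ) ≤ 2 * π * L := by positivity
  rw [← MeasureTheory.integral_Ioc_eq_integral_Ioo,
    ← intervalIntegral.integral_of_le hle,
    intervalIntegral.integral_comp_mul_add (fun u => Real.cos u ^ 2) hc d]
  have hb : ((n : ℝ) / L) * (2 * π * L) + d = d + (n : ℝ) * (2 * π) := by
    field_simp; ring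
  rw [hb]
  have ha0 : ((n : ℝ) / L) * 0 + d = d := by ring
  rw [ha0, integral_cos_sq, Real.cos_add_int_mul_two_pi, Real.sin_add_int_mul_two_pi]
  rw [smul_eq_mul]
  field_simp
  ring

theorem integral_cos_sq_box (L₁ L₂ : ℝ) (hL₁ : 0 < L₁) (hL₂ : 0 < L₂) (n₁ n₂ : ℤ)
    (hn : ¬(n₁ = 0 ∧ n₂ = 0)) :
    ∫ yh in {yh : Fin 2 → ℝ | yh 0 ∈ Set.Ioo 0 (2 * π * L₁) ∧ yh 1 ∈ Set.Ioo 0 (2 * π * L₂)},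
      Real.cos ((n₁ / L₁) * yh 0 + (n₂ / L₂) * yh 1) ^ 2 = 2 * π ^ 2 * (L₁ * L₂) := by
  have hA : (0 : ℝ) < 2 * π * L₁ := by positivity
  have hB : (0 : ℝ) < 2 * π * L₂ := by positivity
  set c₁ : ℝ := (n₁ : ℝ) / L₁ with hc₁
  set c₂ : ℝ := (n₂ : ℝ) / L₂ with hc₂
  set g : ℝ × ℝ → ℝ := fun p => Real.cos (c₁ * p.1 + c₂ * p.2) ^ 2 with hg
  have hgc : Continuous g := by
    apply Continuous.pow
    exact Real.continuous_cos.comp ((continuous_const.mul continuous_fst).add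
      (continuous_const.mul continuous_snd))
  set s : Set ℝ := Set.Ioo 0 (2 * π * L₁)
  set t : Set ℝ := Set.Ioo 0 (2 * π * L₂)
  have hpre : (MeasurableEquiv.finTwoArrow (α := ℝ)) ⁻¹' (s ×ˢ t) =
      {yh : Fin 2 → ℝ | yh 0 ∈ Set.Ioo 0 (2 * π * L₁) ∧ yh 1 ∈ Set.Ioo 0 (2 * π * L₂)} := by
    ext x
    simp only [Set.mem_preimage, Set.mem_prod, MeasurableEquiv.finTwoArrow,
      MeasurableEquiv.coe_mk, Equiv.coe_fn_mk, Set.mem_setOf_eq]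
    simp [s, t, Set.mem_Ioo, finTwoArrowEquiv]
  have hmp := MeasureTheory.volume_preserving_finTwoArrow ℝ
  have step1 : (∫ yh in {yh : Fin 2 → ℝ | yh 0 ∈ Set.Ioo 0 (2 * π * L₁) ∧
        yh 1 ∈ Set.Ioo 0 (2 * π * L₂)},
      Real.cos (c₁ * yh 0 + c₂ * yh 1) ^ 2) = ∫ p in s ×ˢ t, g p := by
    rw [← hpre, ← hmp.setIntegral_preimage_emb
      (MeasurableEquiv.finTwoArrow (α := ℝ)).measurableEmbedding g (s ×ˢ t)]
    rfl
  rw [step1]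
  have hint : IntegrableOn g (s ×ˢ t) (volume.prod volume) := by
    apply IntegrableOn.mono_set (t := Set.Icc 0 (2 * π * L₁) ×ˢ Set.Icc 0 (2 * π * L₂))
    · exact hgc.continuousOn.integrableOn_compact (isCompact_Icc.prod isCompact_Icc)
    · exact Set.prod_mono Set.Ioo_subset_Icc_self Set.Ioo_subset_Icc_self
  rw [MeasureTheory.Measure.volume_eq_prod, MeasureTheory.setIntegral_prod g hint]
  by_cases h2 : n₂ = 0
  · have h1 : n₁ ≠ 0 := fun h => hn ⟨h, h2⟩
    have hc20 : c₂ = 0 := by simp [hc₂, h2]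
    have hinner : ∀ x : ℝ, (∫ y in t, g (x, y)) = (2 * π * L₂) * Real.cos (c₁ * x) ^ 2 := by
      intro x
      have he : (fun y => g (x, y)) = fun _ : ℝ => Real.cos (c₁ * x) ^ 2 := by
        funext y; simp [hg, hc20]
      rw [he, MeasureTheory.setIntegral_const, Real.volume_real_Ioo_of_le (by linarith), smul_eq_mul]
      ring_nf
    simp_rw [hinner]
    rw [MeasureTheory.integral_const_mul]
    have hval : (∫ x in s, Real.cos (c₁ * x) ^ 2) = π * L₁ := by
      have hv := integral_cos_sq_period L₁ hL₁ n₁ h1 0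
      simpa using hv
    rw [hval]
    ring
  · have hinner : ∀ x : ℝ, (∫ y in t, g (x, y)) = π * L₂ := by
      intro x
      have hcomm : (fun y => g (x, y)) = fun y : ℝ => Real.cos ((n₂ / L₂) * y + c₁ * x) ^ 2 := by
        funext y; simp [hg, hc₂]; ring_nf
      rw [hcomm]
      exact integral_cos_sq_period L₂ hL₂ n₂ h2 (c₁ * x)
    simp_rw [hinner]
    rw [MeasureTheory.setIntegral_const, Real.volume_real_Ioo_of_le (by linarith), smul_eq_mul]
    ring

set_option maxHeartbeats 2000000 in
/-- A horizontal magnetic field cannot stabilize: for any nonzero `M̄ = (M̄₁, M̄₂, 0)` and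
any `a > 0` there is a smooth, horizontally periodic, divergence-free vector field `w`,
vanishing for `y₃` outside a compact subset of `(-l, τ)`, with nontrivial interface trace,
such that `∫_{Q×(-l,τ)} |M̄₁∂₁w + M̄₂∂₂w|² < a ∫_Q |w₃(y_h, 0)|²`. -/
theorem stmt_3 (L₁ L₂ l τ a : ℝ) (hL₁ : 0 < L₁) (hL₂ : 0 < L₂) (hl : 0 < l) (hτ : 0 < τ)
    (ha : 0 < a) (M : Fin 3 → ℝ) (hM3 : M 2 = 0) (hM : M ≠ 0) :
    ∃ w : (Fin 3 → ℝ) → (Fin 3 → ℝ),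
      ContDiff ℝ (⊤ : ℕ∞) w ∧
      (∀ y, w (y + Pi.single 0 (2 * π * L₁)) = w y) ∧
      (∀ y, w (y + Pi.single 1 (2 * π * L₂)) = w y) ∧
      (∀ y, (∑ i : Fin 3, fderiv ℝ (fun z => w z i) y (Pi.single i 1)) = 0) ∧
      (∃ K : Set ℝ, IsCompact K ∧ K ⊆ Set.Ioo (-l) τ ∧
        ∀ y : Fin 3 → ℝ, y 2 ∉ K → w y = 0) ∧
      (∃ yh : Fin 2 → ℝ, w ![yh 0, yh 1, 0] 2 ≠ 0) ∧
      (∫ y in {y : Fin 3 → ℝ | y 0 ∈ Set.Ioo 0 (2 * π * L₁) ∧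
            y 1 ∈ Set.Ioo 0 (2 * π * L₂) ∧ y 2 ∈ Set.Ioo (-l) τ},
          ∑ j : Fin 3,
            (M 0 * fderiv ℝ (fun z => w z j) y (Pi.single 0 1) +
             M 1 * fderiv ℝ (fun z => w z j) y (Pi.single 1 1)) ^ 2)
        < a * ∫ yh in {yh : Fin 2 → ℝ | yh 0 ∈ Set.Ioo 0 (2 * π * L₁) ∧
              yh 1 ∈ Set.Ioo 0 (2 * π * L₂)},
            (w ![yh 0, yh 1, 0] 2) ^ 2 := by
  -- the bump function profile
  obtain ⟨r, hrdef⟩ : ∃ r : ℝ, r = min l τ / 2 := ⟨_, rfl⟩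
  have hr : 0 < r := by rw [hrdef]; have := lt_min hl hτ; positivity
  have hrl : r < l := by
    have h1 : min l τ ≤ l := min_le_left _ _
    have := lt_min hl hτ
    rw [hrdef]; linarith only [h1, this]
  have hrτ : r < τ := by
    have h1 : min l τ ≤ τ := min_le_right _ _
    have := lt_min hl hτ
    rw [hrdef]; linarith only [h1, this]
  obtain ⟨φb, hφbIn, hφbOut⟩ : ∃ φb : ContDiffBump (0 : ℝ), φb.rIn = r / 2 ∧ φb.rOut = r :=
    ⟨⟨r / 2, r, by positivity, by linarith⟩, rfl, rfl⟩
  obtain ⟨f, hfdef⟩ : ∃ f : ℝ → ℝ, f = ⇑φb := ⟨_, rfl⟩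
  have hf : ContDiff ℝ (⊤ : ℕ∞) f := by rw [hfdef]; exact φb.contDiff
  have hfd : Differentiable ℝ f := hf.differentiable (by simp)
  have hf' : ContDiff ℝ (⊤ : ℕ∞) (deriv f) := (contDiff_infty_iff_deriv.mp hf).2
  have hf'd : Differentiable ℝ (deriv f) :=
    hf'.differentiable (by simp)
  have hf0 : f 0 = 1 := by
    rw [hfdef]
    exact φb.one_of_mem_closedBall (by
      simp only [Metric.mem_closedBall, dist_self, hφbIn]
      positivity)
  have hf01 : ∀ t, 0 ≤ f t ∧ f t ≤ 1 := fun t => by rw [hfdef]; exact ⟨φb.nonneg, φb.le_one⟩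
  -- support facts
  have hfsupp : ∀ t, t ∉ Set.Icc (-r) r → f t = 0 := by
    intro t ht
    have hns : t ∉ Function.support f := by
      rw [hfdef, φb.support_eq]
      intro hmem
      apply ht
      have hball : Metric.ball (0 : ℝ) φb.rOut = Set.Ioo (-r) r := by
        rw [Real.ball_eq_Ioo, hφbOut]
        norm_num
      rw [hball] at hmem
      exact Set.Ioo_subset_Icc_self hmem
    simpa using Function.notMem_support.mp hns
  have hf'supp : ∀ t, t ∉ Set.Icc (-r) r → deriv f t = 0 := by
    intro t ht
    have hopen : IsOpen (Set.Icc (-r) r)ᶜ := isClosed_Icc.isOpen_compl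
    have hev : f =ᶠ[nhds t] fun _ => 0 := by
      filter_upwards [hopen.mem_nhds ht] with x hx
      exact hfsupp x hx
    rw [hev.deriv_eq]
    simp
  -- bound on deriv f
  obtain ⟨C', hC'0, hC'⟩ : ∃ C' : ℝ, 0 ≤ C' ∧ ∀ t, |deriv f t| ≤ C' := by
    have hcs : HasCompactSupport f := by rw [hfdef]; exact φb.hasCompactSupport
    have habs : HasCompactSupport fun t => |deriv f t| := hcs.deriv.abs
    obtain ⟨z, hz⟩ :=
      (continuous_abs.comp hf'.continuous).exists_forall_ge_of_hasCompactSupport habs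
    exact ⟨|deriv f z|, abs_nonneg _, hz⟩
  -- geometric data
  have hA : (0 : ℝ) < 2 * π * L₁ := by positivity
  have hB : (0 : ℝ) < 2 * π * L₂ := by positivity
  obtain ⟨S3, hS3def⟩ : ∃ S3 : Set (Fin 3 → ℝ), S3 = {y : Fin 3 → ℝ |
      y 0 ∈ Set.Ioo 0 (2 * π * L₁) ∧ y 1 ∈ Set.Ioo 0 (2 * π * L₂) ∧ y 2 ∈ Set.Ioo (-l) τ} :=
    ⟨_, rfl⟩
  have hS3m : MeasurableSet S3 := by
    rw [hS3def]
    apply MeasurableSet.inter ((measurable_pi_apply 0) measurableSet_Ioo)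
    exact MeasurableSet.inter ((measurable_pi_apply 1) measurableSet_Ioo)
      ((measurable_pi_apply 2) measurableSet_Ioo)
  have hS3eq : S3 = Set.univ.pi
      ![Set.Ioo 0 (2 * π * L₁), Set.Ioo 0 (2 * π * L₂), Set.Ioo (-l) τ] := by
    rw [hS3def]
    ext y
    simp only [Set.mem_setOf_eq, Set.mem_univ_pi]
    constructor
    · rintro ⟨h0, h1, h2⟩ i
      fin_cases i <;> simpa
    · intro h
      exact ⟨h 0, h 1, h 2⟩
  have hS3fin : volume S3 < ⊤ := by
    rw [hS3eq, volume_pi_pi, Fin.prod_univ_three]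
    simp only [Matrix.cons_val_zero, Matrix.cons_val_one, Matrix.head_cons,
      Matrix.cons_val_two, Matrix.tail_cons, Real.volume_Ioo]
    exact ENNReal.mul_lt_top (ENNReal.mul_lt_top ENNReal.ofReal_lt_top ENNReal.ofReal_lt_top)
      ENNReal.ofReal_lt_top
  obtain ⟨V, hVdef⟩ : ∃ V : ℝ, V = (volume S3).toReal := ⟨_, rfl⟩
  have hV0 : 0 ≤ V := hVdef ▸ ENNReal.toReal_nonneg
  obtain ⟨m, hmdef⟩ : ∃ m : ℝ, m = min (1 / L₁ ^ 2) (1 / L₂ ^ 2) := ⟨_, rfl⟩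
  have hm : 0 < m := hmdef ▸ lt_min (by positivity) (by positivity)
  obtain ⟨D, hDdef⟩ : ∃ D : ℝ, D = 1 + C' ^ 2 / m := ⟨_, rfl⟩
  have hD : 0 < D := by rw [hDdef]; positivity
  obtain ⟨R, hRdef⟩ : ∃ R : ℝ, R = 2 * π ^ 2 * (L₁ * L₂) := ⟨_, rfl⟩
  have hR : 0 < R := by rw [hRdef]; positivity
  have hDV1 : 0 < D * V + 1 := by positivity
  have harg : 0 < a * R / (D * V + 1) := by positivity
  obtain ⟨ε, hεdef⟩ : ∃ ε : ℝ, ε = Real.sqrt (a * R / (D * V + 1)) := ⟨_, rfl⟩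
  have hε : 0 < ε := hεdef ▸ Real.sqrt_pos.mpr harg
  have hε2 : ε ^ 2 = a * R / (D * V + 1) := hεdef ▸ Real.sq_sqrt harg.le
  -- Dirichlet
  obtain ⟨n₁, n₂, hn, hθ'⟩ := dirichlet_aux (M 0 / L₁) (M 1 / L₂) ε hε
  obtain ⟨c₁, hc₁⟩ : ∃ c : ℝ, c = (n₁ : ℝ) / L₁ := ⟨_, rfl⟩
  obtain ⟨c₂, hc₂⟩ : ∃ c : ℝ, c = (n₂ : ℝ) / L₂ := ⟨_, rfl⟩
  have hθ : |M 0 * c₁ + M 1 * c₂| < ε := by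
    have he : M 0 * c₁ + M 1 * c₂ = (n₁ : ℝ) * (M 0 / L₁) + (n₂ : ℝ) * (M 1 / L₂) := by
      rw [hc₁, hc₂]; ring
    rw [he]; exact hθ'
  -- wave number magnitude
  obtain ⟨κ, hκdef⟩ : ∃ κ : ℝ, κ = c₁ ^ 2 + c₂ ^ 2 := ⟨_, rfl⟩
  have hsqkey : ∀ (nz : ℤ) (Lz : ℝ), nz ≠ 0 → 0 < Lz → 1 / Lz ^ 2 ≤ ((nz : ℝ) / Lz) ^ 2 := by
    intro nz Lz hnz hLz
    rw [div_pow]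
    have h1 : (1 : ℝ) ≤ |(nz : ℝ)| := by exact_mod_cast Int.one_le_abs hnz
    have h2 : (1 : ℝ) ≤ (nz : ℝ) ^ 2 := by nlinarith [abs_nonneg ((nz : ℝ)), sq_abs ((nz : ℝ))]
    gcongr
  have hκm : m ≤ κ := by
    rw [hκdef, hc₁, hc₂, hmdef]
    rcases not_and_or.mp hn with h | h
    · have h1 := hsqkey n₁ L₁ h hL₁
      have h2 : min (1 / L₁ ^ 2) (1 / L₂ ^ 2) ≤ 1 / L₁ ^ 2 := min_le_left _ _
      linarith only [h1, h2, sq_nonneg ((n₂ : ℝ) / L₂)]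
    · have h1 := hsqkey n₂ L₂ h hL₂
      have h2 : min (1 / L₁ ^ 2) (1 / L₂ ^ 2) ≤ 1 / L₂ ^ 2 := min_le_right _ _
      linarith only [h1, h2, sq_nonneg ((n₁ : ℝ) / L₁)]
  have hκ0 : 0 < κ := lt_of_lt_of_le hm hκm
  -- the vector field
  obtain ⟨g, hgdef⟩ : ∃ g : ℝ → ℝ, g = fun t => -(deriv f t) / κ := ⟨_, rfl⟩
  have hgdiff : Differentiable ℝ g := by rw [hgdef]; exact (hf'd.neg).div_const κ
  obtain ⟨g1, hg1def⟩ : ∃ g1 : ℝ → ℝ, g1 = fun t => c₁ * g t := ⟨_, rfl⟩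
  obtain ⟨g2, hg2def⟩ : ∃ g2 : ℝ → ℝ, g2 = fun t => c₂ * g t := ⟨_, rfl⟩
  have hg1diff : Differentiable ℝ g1 := by rw [hg1def]; exact hgdiff.const_mul c₁
  have hg2diff : Differentiable ℝ g2 := by rw [hg2def]; exact hgdiff.const_mul c₂
  refine ⟨fun y => ![g1 (y 2) * Real.sin (c₁ * y 0 + c₂ * y 1),
      g2 (y 2) * Real.sin (c₁ * y 0 + c₂ * y 1),
      f (y 2) * Real.cos (c₁ * y 0 + c₂ * y 1)], ?_, ?_, ?_, ?_, ?_, ?_, ?_⟩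
  · -- smoothness
    have hproj : ∀ i : Fin 3, ContDiff ℝ (⊤ : ℕ∞) (fun z : Fin 3 → ℝ => z i) := fun i =>
      contDiff_pi.mp contDiff_id i
    have hph : ContDiff ℝ (⊤ : ℕ∞) (fun z : Fin 3 → ℝ => c₁ * z 0 + c₂ * z 1) :=
      (contDiff_const.mul (hproj 0)).add (contDiff_const.mul (hproj 1))
    have hgc : ContDiff ℝ (⊤ : ℕ∞) g := by
      rw [hgdef]
      exact (hf'.neg).div_const κ
    have hg1c : ContDiff ℝ (⊤ : ℕ∞) g1 := by rw [hg1def]; exact contDiff_const.mul hgc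
    have hg2c : ContDiff ℝ (⊤ : ℕ∞) g2 := by rw [hg2def]; exact contDiff_const.mul hgc
    apply contDiff_pi.mpr
    intro i
    fin_cases i <;>
      simp only [Matrix.cons_val_zero, Matrix.cons_val_one, Matrix.head_cons,
        Matrix.cons_val_two, Matrix.tail_cons, Fin.isValue]
    · exact (hg1c.comp (hproj 2)).mul (Real.contDiff_sin.comp hph)
    · exact (hg2c.comp (hproj 2)).mul (Real.contDiff_sin.comp hph)
    · exact (hf.comp (hproj 2)).mul (Real.contDiff_cos.comp hph)
  · -- periodicity in y₁
    intro y
    have e0 : (y + (Pi.single 0 (2 * π * L₁) : Fin 3 → ℝ)) 0 = y 0 + 2 * π * L₁ := by simp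
    have e1 : (y + (Pi.single 0 (2 * π * L₁) : Fin 3 → ℝ)) 1 = y 1 := by simp [Pi.single_apply]
    have e2 : (y + (Pi.single 0 (2 * π * L₁) : Fin 3 → ℝ)) 2 = y 2 := by simp [Pi.single_apply]
    have hphase : c₁ * (y + (Pi.single 0 (2 * π * L₁) : Fin 3 → ℝ)) 0 + c₂ * (y + (Pi.single 0 (2 * π * L₁) : Fin 3 → ℝ)) 1
        = (c₁ * y 0 + c₂ * y 1) + (n₁ : ℝ) * (2 * π) := by
      rw [e0, e1, hc₁]
      field_simp
      ring
    simp only [hphase, e2, Real.sin_add_int_mul_two_pi, Real.cos_add_int_mul_two_pi]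
  · -- periodicity in y₂
    intro y
    have e0 : (y + (Pi.single 1 (2 * π * L₂) : Fin 3 → ℝ)) 0 = y 0 := by simp [Pi.single_apply]
    have e1 : (y + (Pi.single 1 (2 * π * L₂) : Fin 3 → ℝ)) 1 = y 1 + 2 * π * L₂ := by simp
    have e2 : (y + (Pi.single 1 (2 * π * L₂) : Fin 3 → ℝ)) 2 = y 2 := by simp [Pi.single_apply]
    have hphase : c₁ * (y + (Pi.single 1 (2 * π * L₂) : Fin 3 → ℝ)) 0 + c₂ * (y + (Pi.single 1 (2 * π * L₂) : Fin 3 → ℝ)) 1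
        = (c₁ * y 0 + c₂ * y 1) + (n₂ : ℝ) * (2 * π) := by
      rw [e0, e1, hc₂]
      field_simp
      ring
    simp only [hphase, e2, Real.sin_add_int_mul_two_pi, Real.cos_add_int_mul_two_pi]
  · -- divergence free
    intro y
    rw [Fin.sum_univ_three]
    have hs00 : (Pi.single (M := fun _ : Fin 3 => ℝ) 0 1) 0 = 1 := by simp
    have hs01 : (Pi.single (M := fun _ : Fin 3 => ℝ) 0 1) 1 = 0 := by simp
    have hs02 : (Pi.single (M := fun _ : Fin 3 => ℝ) 0 1) 2 = 0 := by simp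
    have hs10 : (Pi.single (M := fun _ : Fin 3 => ℝ) 1 1) 0 = 0 := by simp
    have hs11 : (Pi.single (M := fun _ : Fin 3 => ℝ) 1 1) 1 = 1 := by simp
    have hs12 : (Pi.single (M := fun _ : Fin 3 => ℝ) 1 1) 2 = 0 := by simp
    have hs20 : (Pi.single (M := fun _ : Fin 3 => ℝ) 2 1) 0 = 0 := by simp
    have hs21 : (Pi.single (M := fun _ : Fin 3 => ℝ) 2 1) 1 = 0 := by simp
    have hs22 : (Pi.single (M := fun _ : Fin 3 => ℝ) 2 1) 2 = 1 := by simp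
    simp only [Matrix.cons_val_zero, Matrix.cons_val_one, Matrix.head_cons,
      Matrix.cons_val_two, Matrix.tail_cons, Fin.isValue]
    rw [fderiv_mul_trig_aux g1 Real.sin hg1diff Real.differentiable_sin c₁ c₂ y (Pi.single 0 1),
      fderiv_mul_trig_aux g2 Real.sin hg2diff Real.differentiable_sin c₁ c₂ y (Pi.single 1 1),
      fderiv_mul_trig_aux f Real.cos hfd Real.differentiable_cos c₁ c₂ y (Pi.single 2 1)]
    rw [hs00, hs01, hs02, hs10, hs11, hs12, hs20, hs21, hs22]
    simp only [Real.deriv_sin, Real.deriv_cos', mul_zero, zero_mul, mul_one, add_zero, zero_add]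
    rw [hg1def, hg2def, hgdef, hκdef]
    have hne : c₁ ^ 2 + c₂ ^ 2 ≠ 0 := by rw [← hκdef]; exact hκ0.ne'
    beta_reduce
    field_simp
    ring
  · -- compact support in y₃
    refine ⟨Set.Icc (-r) r, isCompact_Icc, ?_, ?_⟩
    · intro x hx
      obtain ⟨hx1, hx2⟩ := hx
      exact ⟨by linarith, by linarith⟩
    · intro y hy
      have h1 : f (y 2) = 0 := hfsupp _ hy
      have h2 : deriv f (y 2) = 0 := hf'supp _ hy
      have h3 : g (y 2) = 0 := by rw [hgdef]; simp [h2]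
      have h4 : g1 (y 2) = 0 := by rw [hg1def]; simp [h3]
      have h5 : g2 (y 2) = 0 := by rw [hg2def]; simp [h3]
      funext i
      fin_cases i <;> simp [h1, h4, h5]
  · -- nontrivial trace
    refine ⟨fun _ => 0, ?_⟩
    simp only [Matrix.cons_val_zero, Matrix.cons_val_one, Matrix.head_cons,
      Matrix.cons_val_two, Matrix.tail_cons, Fin.isValue]
    norm_num [hf0]
  · -- the energy inequality
    set w : (Fin 3 → ℝ) → Fin 3 → ℝ := fun y =>
      ![g1 (y 2) * Real.sin (c₁ * y 0 + c₂ * y 1),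
        g2 (y 2) * Real.sin (c₁ * y 0 + c₂ * y 1),
        f (y 2) * Real.cos (c₁ * y 0 + c₂ * y 1)] with hwdef
    have hw0 : (fun z => w z 0) = fun z : Fin 3 → ℝ =>
        g1 (z 2) * Real.sin (c₁ * z 0 + c₂ * z 1) := by
      funext z; rw [hwdef]; simp
    have hw1 : (fun z => w z 1) = fun z : Fin 3 → ℝ =>
        g2 (z 2) * Real.sin (c₁ * z 0 + c₂ * z 1) := by
      funext z; rw [hwdef]; simp
    have hw2 : (fun z => w z 2) = fun z : Fin 3 → ℝ =>
        f (z 2) * Real.cos (c₁ * z 0 + c₂ * z 1) := by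
      funext z; rw [hwdef]; simp
    have hs00 : (Pi.single (M := fun _ : Fin 3 => ℝ) 0 1) 0 = 1 := by simp
    have hs01 : (Pi.single (M := fun _ : Fin 3 => ℝ) 0 1) 1 = 0 := by simp
    have hs02 : (Pi.single (M := fun _ : Fin 3 => ℝ) 0 1) 2 = 0 := by simp
    have hs10 : (Pi.single (M := fun _ : Fin 3 => ℝ) 1 1) 0 = 0 := by simp
    have hs11 : (Pi.single (M := fun _ : Fin 3 => ℝ) 1 1) 1 = 1 := by simp
    have hs12 : (Pi.single (M := fun _ : Fin 3 => ℝ) 1 1) 2 = 0 := by simp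
    have hsum : ∀ y : Fin 3 → ℝ,
        (∑ j : Fin 3, (M 0 * fderiv ℝ (fun z => w z j) y (Pi.single 0 1) +
          M 1 * fderiv ℝ (fun z => w z j) y (Pi.single 1 1)) ^ 2) =
        (M 0 * c₁ + M 1 * c₂) ^ 2 *
          (Real.cos (c₁ * y 0 + c₂ * y 1) ^ 2 * (g1 (y 2) ^ 2 + g2 (y 2) ^ 2) +
            Real.sin (c₁ * y 0 + c₂ * y 1) ^ 2 * f (y 2) ^ 2) := by
      intro y
      rw [Fin.sum_univ_three, hw0, hw1, hw2,
        fderiv_mul_trig_aux g1 Real.sin hg1diff Real.differentiable_sin c₁ c₂ y (Pi.single 0 1),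
        fderiv_mul_trig_aux g1 Real.sin hg1diff Real.differentiable_sin c₁ c₂ y (Pi.single 1 1),
        fderiv_mul_trig_aux g2 Real.sin hg2diff Real.differentiable_sin c₁ c₂ y (Pi.single 0 1),
        fderiv_mul_trig_aux g2 Real.sin hg2diff Real.differentiable_sin c₁ c₂ y (Pi.single 1 1),
        fderiv_mul_trig_aux f Real.cos hfd Real.differentiable_cos c₁ c₂ y (Pi.single 0 1),
        fderiv_mul_trig_aux f Real.cos hfd Real.differentiable_cos c₁ c₂ y (Pi.single 1 1)]
      rw [hs00, hs01, hs02, hs10, hs11, hs12]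
      simp only [Real.deriv_sin, Real.deriv_cos']
      ring
    have hptb : ∀ y : Fin 3 → ℝ,
        Real.cos (c₁ * y 0 + c₂ * y 1) ^ 2 * (g1 (y 2) ^ 2 + g2 (y 2) ^ 2) +
          Real.sin (c₁ * y 0 + c₂ * y 1) ^ 2 * f (y 2) ^ 2 ≤ D := by
      intro y
      have hgg : g1 (y 2) ^ 2 + g2 (y 2) ^ 2 = (deriv f (y 2)) ^ 2 / κ := by
        have hne : c₁ ^ 2 + c₂ ^ 2 ≠ 0 := by rw [← hκdef]; exact hκ0.ne'
        rw [hg1def, hg2def, hgdef, hκdef]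
        beta_reduce
        field_simp
      have habs := abs_le.mp (hC' (y 2))
      have hd2 : (deriv f (y 2)) ^ 2 ≤ C' ^ 2 := sq_le_sq' (by linarith [habs.1]) habs.2
      have hq : (deriv f (y 2)) ^ 2 / κ ≤ C' ^ 2 / m := div_le_div₀ (by positivity) hd2 hm hκm
      have hcos : Real.cos (c₁ * y 0 + c₂ * y 1) ^ 2 ≤ 1 := Real.cos_sq_le_one _
      have hsin : Real.sin (c₁ * y 0 + c₂ * y 1) ^ 2 ≤ 1 := Real.sin_sq_le_one _
      obtain ⟨hfl, hfu⟩ := hf01 (y 2)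
      have hf2 : f (y 2) ^ 2 ≤ 1 := by
        rw [← one_pow 2]
        exact pow_le_pow_left₀ hfl hfu 2
      have hGnn : 0 ≤ g1 (y 2) ^ 2 + g2 (y 2) ^ 2 := by positivity
      have t1 : Real.cos (c₁ * y 0 + c₂ * y 1) ^ 2 * (g1 (y 2) ^ 2 + g2 (y 2) ^ 2)
          ≤ C' ^ 2 / m := by
        calc Real.cos (c₁ * y 0 + c₂ * y 1) ^ 2 * (g1 (y 2) ^ 2 + g2 (y 2) ^ 2)
            ≤ g1 (y 2) ^ 2 + g2 (y 2) ^ 2 := mul_le_of_le_one_left hGnn hcos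
          _ = (deriv f (y 2)) ^ 2 / κ := hgg
          _ ≤ C' ^ 2 / m := hq
      have t2 : Real.sin (c₁ * y 0 + c₂ * y 1) ^ 2 * f (y 2) ^ 2 ≤ 1 := by
        nlinarith only [hsin, hf2, sq_nonneg (f (y 2)), sq_nonneg (Real.sin (c₁ * y 0 + c₂ * y 1))]
      rw [hDdef]
      linarith only [t1, t2]
    have hnormbd : ∀ y ∈ S3,
        ‖(∑ j : Fin 3, (M 0 * fderiv ℝ (fun z => w z j) y (Pi.single 0 1) +
          M 1 * fderiv ℝ (fun z => w z j) y (Pi.single 1 1)) ^ 2)‖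
          ≤ (M 0 * c₁ + M 1 * c₂) ^ 2 * D := by
      intro y _
      rw [Real.norm_eq_abs, hsum y, abs_of_nonneg (by positivity)]
      exact mul_le_mul_of_nonneg_left (hptb y) (sq_nonneg _)
    have hInt := MeasureTheory.norm_setIntegral_le_of_norm_le_const hS3fin hnormbd
    rw [← hS3def]
    have htr : ∀ yh : Fin 2 → ℝ, w ![yh 0, yh 1, 0] 2 = Real.cos (c₁ * yh 0 + c₂ * yh 1) := by
      intro yh
      rw [hwdef]
      simp [hf0]
    simp only [htr]
    have hRHS : (∫ yh in {yh : Fin 2 → ℝ | yh 0 ∈ Set.Ioo 0 (2 * π * L₁) ∧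
        yh 1 ∈ Set.Ioo 0 (2 * π * L₂)}, Real.cos (c₁ * yh 0 + c₂ * yh 1) ^ 2) = R := by
      rw [hc₁, hc₂, hRdef]
      exact integral_cos_sq_box L₁ L₂ hL₁ hL₂ n₁ n₂ hn
    rw [hRHS]
    have hθ2 : (M 0 * c₁ + M 1 * c₂) ^ 2 < ε ^ 2 := by
      have h := pow_lt_pow_left₀ hθ (abs_nonneg _) two_ne_zero
      rwa [sq_abs] at h
    have h5 : ε ^ 2 * (D * V + 1) = a * R := by
      rw [hε2]
      field_simp
    have h6 : (M 0 * c₁ + M 1 * c₂) ^ 2 * (D * V + 1) < a * R := by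
      calc (M 0 * c₁ + M 1 * c₂) ^ 2 * (D * V + 1) < ε ^ 2 * (D * V + 1) :=
            mul_lt_mul_of_pos_right hθ2 hDV1
        _ = a * R := h5
    have h8 := hInt
    rw [Real.norm_eq_abs, MeasureTheory.measureReal_def, ← hVdef] at h8
    have h9 : (M 0 * c₁ + M 1 * c₂) ^ 2 * D * V < a * R := by
      linarith only [h6, sq_nonneg (M 0 * c₁ + M 1 * c₂)]
    exact lt_of_le_of_lt (le_trans (le_abs_self _) h8) h9
end

section
/- Let L₁, L₂, l, τ > 0 and let M̄ = (M̄₁, M̄₂, 0) ∈ ℝ³ satisfy M̄₁ ≠ 0 and suppose the ratio (L₁ M̄₂)/(M̄₁ L₂) is a rational number. Then there exists a smooth vector field w : ℝ³ → ℝ³ that is horizontally periodic (with periods 2πL₁ and 2πL₂ in y₁ and y₂), divergence-free on ℝ³, vanishes whenever y₃ lies outside some compact subset of (−l, τ), whose trace y_h ↦ w₃(y_h, 0) is not identically zero, and which satisfies M̄₁ ∂₁w + M̄₂ ∂₂w ≡ 0 on ℝ³. -/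
open MeasureTheory Real

/-- Rational-ratio case: if `M̄ = (M̄₁, M̄₂, 0)` with `M̄₁ ≠ 0` and `(L₁M̄₂)/(M̄₁L₂)` rational,
there exists a smooth, horizontally periodic, divergence-free vector field `w`, vanishing
for `y₃` outside a compact subset of `(-l, τ)`, with nontrivial interface trace, that is
exactly annihilated by the directional derivative `M̄₁∂₁ + M̄₂∂₂`. -/
theorem stmt_4 (L₁ L₂ l τ : ℝ) (hL₁ : 0 < L₁) (hL₂ : 0 < L₂) (hl : 0 < l) (hτ : 0 < τ)
    (M : Fin 3 → ℝ) (hM1 : M 0 ≠ 0) (hM3 : M 2 = 0)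
    (hrat : ∃ q : ℚ, (L₁ * M 1) / (M 0 * L₂) = (q : ℝ)) :
    ∃ w : (Fin 3 → ℝ) → (Fin 3 → ℝ),
      ContDiff ℝ (⊤ : ℕ∞) w ∧
      (∀ y, w (y + Pi.single 0 (2 * π * L₁)) = w y) ∧
      (∀ y, w (y + Pi.single 1 (2 * π * L₂)) = w y) ∧
      (∀ y, (∑ i : Fin 3, fderiv ℝ (fun z => w z i) y (Pi.single i 1)) = 0) ∧
      (∃ K : Set ℝ, IsCompact K ∧ K ⊆ Set.Ioo (-l) τ ∧
        ∀ y : Fin 3 → ℝ, y 2 ∉ K → w y = 0) ∧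
      (∃ yh : Fin 2 → ℝ, w ![yh 0, yh 1, 0] 2 ≠ 0) ∧
      (∀ (y : Fin 3 → ℝ) (j : Fin 3),
        M 0 * fderiv ℝ (fun z => w z j) y (Pi.single 0 1) +
          M 1 * fderiv ℝ (fun z => w z j) y (Pi.single 1 1) = 0) := by
  obtain ⟨q, hq⟩ := hrat
  have hL₂' : L₂ ≠ 0 := ne_of_gt hL₂
  have hL₁' : L₁ ≠ 0 := ne_of_gt hL₁
  set k : ℝ := (q.den : ℝ) / (L₂ * M 0) with hk
  set c₁ : ℝ := k * M 1 with hc₁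
  set c₂ : ℝ := -(k * M 0) with hc₂
  have hden : ((q.den : ℝ)) ≠ 0 := Nat.cast_ne_zero.mpr q.den_nz
  have hc₂val : c₂ = -((q.den : ℝ) / L₂) := by
    rw [hc₂, hk]; field_simp
  have hc₂ne : c₂ ≠ 0 := by
    rw [hc₂val]
    intro h
    apply hden
    have := neg_eq_zero.mp h
    field_simp at this
    simpa using this
  have hqden : ((q.den : ℝ)) * (q : ℝ) = (q.num : ℝ) := by
    rw [Rat.cast_def]; field_simp
  have hc₁L : c₁ * L₁ = (q.num : ℝ) := by
    rw [hc₁, hk, ← hqden, ← hq]; field_simp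
  have hc₂L : c₂ * L₂ = -(q.den : ℝ) := by
    rw [hc₂val]; field_simp
  have hMc : M 0 * c₁ + M 1 * c₂ = 0 := by rw [hc₁, hc₂]; ring
  -- the bump function
  set r : ℝ := min l τ with hr
  have hr0 : 0 < r := lt_min hl hτ
  let bump : ContDiffBump (0 : ℝ) := ⟨r / 4, r / 2, by positivity, by linarith⟩
  set ψ : ℝ → ℝ := fun x => bump x with hψdef
  have hψc : ContDiff ℝ (⊤ : ℕ∞) ψ := bump.contDiff
  have hψ0 : ψ 0 = 1 := bump.one_of_mem_closedBall (by
    simp only [Metric.mem_closedBall, dist_self]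
    positivity)
  have hψd : ContDiff ℝ (⊤ : ℕ∞) (deriv ψ) := (contDiff_infty_iff_deriv.mp hψc).2
  set K : Set ℝ := Metric.closedBall 0 (r / 2) with hK
  have hKt : tsupport ψ = K := bump.tsupport_eq
  have hψzero : ∀ x ∉ K, ψ x = 0 := fun x hx =>
    image_eq_zero_of_notMem_tsupport (by rw [hKt]; exact hx)
  have hψdzero : ∀ x ∉ K, deriv ψ x = 0 := by
    intro x hx
    have h1 : ψ =ᶠ[nhds x] 0 :=
      notMem_tsupport_iff_eventuallyEq.mp (by rw [hKt]; exact hx)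
    rw [h1.deriv_eq]
    exact deriv_const x 0
  -- the linear forms
  set P : (Fin 3 → ℝ) →L[ℝ] ℝ := ContinuousLinearMap.proj 2 with hP
  set Φ : (Fin 3 → ℝ) →L[ℝ] ℝ :=
    c₁ • ContinuousLinearMap.proj 0 + c₂ • ContinuousLinearMap.proj 1 with hΦ
  have hΦapp : ∀ y : Fin 3 → ℝ, Φ y = c₁ * y 0 + c₂ * y 1 := fun y => by
    simp [hΦ, smul_eq_mul]
  have hPapp : ∀ y : Fin 3 → ℝ, P y = y 2 := fun y => rfl
  have hΦ0 : Φ (Pi.single 0 1) = c₁ := by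
    rw [hΦapp]; simp
  have hΦ1 : Φ (Pi.single 1 1) = c₂ := by
    rw [hΦapp]; simp
  have hΦ2 : Φ (Pi.single 2 1) = 0 := by
    rw [hΦapp]; simp
  have hP0 : P (Pi.single 0 (1 : ℝ)) = 0 := by rw [hPapp]; simp
  have hP1 : P (Pi.single 1 (1 : ℝ)) = 0 := by rw [hPapp]; simp
  have hP2 : P (Pi.single 2 (1 : ℝ)) = 1 := by rw [hPapp]; simp
  -- the field
  set w : (Fin 3 → ℝ) → (Fin 3 → ℝ) := fun y =>
    ![0, -(deriv ψ (y 2)) * Real.sin (Φ y), c₂ * (ψ (y 2) * Real.cos (Φ y))] with hw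
  -- derivative facts
  have hsin : ∀ y, HasFDerivAt (fun z : Fin 3 → ℝ => Real.sin (Φ z))
      (Real.cos (Φ y) • Φ) y :=
    fun y => (Real.hasDerivAt_sin (Φ y)).comp_hasFDerivAt y Φ.hasFDerivAt
  have hcos : ∀ y, HasFDerivAt (fun z : Fin 3 → ℝ => Real.cos (Φ z))
      ((-Real.sin (Φ y)) • Φ) y :=
    fun y => (Real.hasDerivAt_cos (Φ y)).comp_hasFDerivAt y Φ.hasFDerivAt
  have hψf : ∀ y : Fin 3 → ℝ, HasFDerivAt (fun z : Fin 3 → ℝ => ψ (z 2))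
      (deriv ψ (y 2) • P) y :=
    fun y => by have h := ((hψc.differentiable (by simp) (y 2)).hasDerivAt).comp_hasFDerivAt y (P.hasFDerivAt (x := y)); exact h
  have hψdf : ∀ y : Fin 3 → ℝ, HasFDerivAt (fun z : Fin 3 → ℝ => deriv ψ (z 2))
      (deriv (deriv ψ) (y 2) • P) y :=
    fun y => by have h := ((hψd.differentiable (by simp) (y 2)).hasDerivAt).comp_hasFDerivAt y (P.hasFDerivAt (x := y)); exact h
  have hw0 : (fun z => w z 0) = fun _ : Fin 3 → ℝ => (0 : ℝ) := by
    funext z; simp [hw]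
  have hw1 : (fun z => w z 1) = fun z : Fin 3 → ℝ =>
      -(deriv ψ (z 2)) * Real.sin (Φ z) := by
    funext z; simp [hw]
  have hw2 : (fun z => w z 2) = fun z : Fin 3 → ℝ =>
      c₂ * (ψ (z 2) * Real.cos (Φ z)) := by
    funext z; simp [hw]
  have hD0 : ∀ y, fderiv ℝ (fun z => w z 0) y = 0 := by
    intro y; rw [hw0]; exact fderiv_const_apply 0
  have hD1 : ∀ y, fderiv ℝ (fun z => w z 1) y =
      (-(deriv ψ (y 2))) • (Real.cos (Φ y) • Φ) +
        Real.sin (Φ y) • (-(deriv (deriv ψ) (y 2) • P)) := by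
    intro y
    rw [hw1]
    exact (((hψdf y).neg).mul (hsin y)).fderiv
  have hD2 : ∀ y, fderiv ℝ (fun z => w z 2) y =
      c₂ • (ψ (y 2) • ((-Real.sin (Φ y)) • Φ) +
        Real.cos (Φ y) • (deriv ψ (y 2) • P)) := by
    intro y
    rw [hw2]
    exact (((hψf y).mul (hcos y)).const_mul c₂).fderiv
  refine ⟨w, ?_, ?_, ?_, ?_, ?_, ?_, ?_⟩
  · -- smoothness
    rw [hw]
    apply contDiff_pi.2
    intro i
    fin_cases i
    · simp only [Matrix.cons_val_zero]
      exact contDiff_const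
    · simp only [Matrix.cons_val_one, Matrix.head_cons]
      exact ((hψd.comp P.contDiff).neg).mul (Real.contDiff_sin.comp Φ.contDiff)
    · simp only [Matrix.cons_val_two, Matrix.tail_cons, Matrix.head_cons]
      exact contDiff_const.mul ((hψc.comp P.contDiff).mul
        (Real.contDiff_cos.comp Φ.contDiff))
  · -- periodicity in y₁
    intro y
    have e2 : (y + Pi.single 0 (2 * π * L₁) : Fin 3 → ℝ) 2 = y 2 := by
      simp [Pi.single_eq_of_ne]
    have eΦ : Φ (y + Pi.single 0 (2 * π * L₁)) = Φ y + (q.num : ℝ) * (2 * π) := by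
      rw [map_add]
      congr 1
      rw [hΦapp]
      simp only [Pi.single_eq_same, ne_eq, Fin.ext_iff, Pi.single_eq_of_ne (by decide : (1 : Fin 3) ≠ 0)]
      linear_combination (2 * π) * hc₁L
    simp only [hw, e2, eΦ, Real.sin_add_int_mul_two_pi, Real.cos_add_int_mul_two_pi]
  · -- periodicity in y₂
    intro y
    have e2 : (y + Pi.single 1 (2 * π * L₂) : Fin 3 → ℝ) 2 = y 2 := by
      simp [Pi.single_eq_of_ne]
    have eΦ : Φ (y + Pi.single 1 (2 * π * L₂)) = Φ y + ((-(q.den : ℤ) : ℤ) : ℝ) * (2 * π) := by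
      rw [map_add]
      congr 1
      rw [hΦapp]
      simp only [Pi.single_eq_same, ne_eq, Fin.ext_iff, Pi.single_eq_of_ne (by decide : (0 : Fin 3) ≠ 1)]
      push_cast
      linear_combination (2 * π) * hc₂L
    simp only [hw, e2, eΦ, Real.sin_add_int_mul_two_pi, Real.cos_add_int_mul_two_pi]
  · -- divergence free
    intro y
    rw [Fin.sum_univ_three, hD0 y, hD1 y, hD2 y]
    simp only [ContinuousLinearMap.zero_apply, ContinuousLinearMap.add_apply,
      ContinuousLinearMap.smul_apply, ContinuousLinearMap.neg_apply, smul_eq_mul,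
      hΦ1, hΦ2, hP1, hP2]
    ring
  · -- support
    refine ⟨K, isCompact_closedBall 0 (r / 2), ?_, ?_⟩
    · intro x hx
      have hx' : |x| ≤ r / 2 := by
        simpa [hK, Real.dist_eq] using hx
      obtain ⟨h1, h2⟩ := abs_le.mp hx'
      have hrl : r ≤ l := min_le_left l τ
      have hrτ : r ≤ τ := min_le_right l τ
      exact ⟨by linarith, by linarith⟩
    · intro y hy
      funext i
      fin_cases i <;>
        simp [hw, hψzero _ hy, hψdzero _ hy]
  · -- nontrivial trace
    refine ⟨![0, 0], ?_⟩
    have hvec : (![(![(0:ℝ),0] : Fin 2 → ℝ) 0, (![(0:ℝ),0] : Fin 2 → ℝ) 1, 0] : Fin 3 → ℝ)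
        = ![0, 0, 0] := by
      funext i; fin_cases i <;> rfl
    rw [hvec]
    have hΦz : Φ (![(0 : ℝ), 0, 0]) = 0 := by rw [hΦapp]; norm_num
    have h0 : (![(0 : ℝ), 0, 0] : Fin 3 → ℝ) 2 = 0 := rfl
    simp only [hw, Matrix.cons_val_two, Matrix.tail_cons, Matrix.head_cons, h0, hΦz,
      Real.cos_zero, hψ0, mul_one]
    exact hc₂ne
  · -- annihilated by directional derivative
    intro y j
    fin_cases j <;> simp only [Fin.isValue, Fin.zero_eta, Fin.mk_one]
    · rw [hD0 y]; simp
    · rw [hD1 y]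
      simp only [ContinuousLinearMap.add_apply, ContinuousLinearMap.smul_apply,
        ContinuousLinearMap.neg_apply, smul_eq_mul, hΦ0, hΦ1, hP0, hP1]
      linear_combination (-(deriv ψ (y 2)) * Real.cos (Φ y)) * hMc
    · show M 0 * fderiv ℝ (fun z => w z 2) y (Pi.single 0 1) +
          M 1 * fderiv ℝ (fun z => w z 2) y (Pi.single 1 1) = 0
      rw [hD2 y]
      simp only [ContinuousLinearMap.add_apply, ContinuousLinearMap.smul_apply,
        ContinuousLinearMap.neg_apply, smul_eq_mul, hΦ0, hΦ1, hP0, hP1]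
      linear_combination (c₂ * ψ (y 2) * (-Real.sin (Φ y))) * hMc
end

section
/- Let L₁, L₂ > 0 and let f : ℝ² → ℝ² satisfy the equivariance conditions f(y + 2πL₁e₁) = f(y) + 2πL₁e₁ and f(y + 2πL₂e₂) = f(y) + 2πL₂e₂ for all y ∈ ℝ², together with the displacement bounds |f₁(y) − y₁| ≤ πL₁/2 and |f₂(y) − y₂| ≤ πL₂/2 for all y ∈ ℝ². If f is injective on the enlarged cell (−3πL₁, 3πL₁) × (−3πL₂, 3πL₂), then f is injective on all of ℝ². -/
open Real

lemma stmt7_aux (f : (Fin 2 → ℝ) → (Fin 2 → ℝ)) (i : Fin 2) (c : ℝ)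
    (h : ∀ y, f (y + Pi.single i c) = f y + Pi.single i c) :
    ∀ (m : ℤ) y, f (y + Pi.single i ((m : ℝ) * c)) = f y + Pi.single i ((m : ℝ) * c) := by
  have hinv : ∀ y, f (y - Pi.single i c) = f y - Pi.single i c := by
    intro y
    have := h (y - Pi.single i c)
    rw [sub_add_cancel] at this
    rw [this]; abel
  intro m
  induction m using Int.induction_on with
  | zero => simp
  | succ k ih =>
      intro y
      have ih' : ∀ y, f (y + Pi.single i ((k : ℝ) * c)) = f y + Pi.single i ((k : ℝ) * c) := by
        intro y; have := ih y; push_cast at this; exact this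
      push_cast
      rw [add_mul, one_mul, Pi.single_add, ← add_assoc, h, ih', add_assoc]
  | pred k ih =>
      intro y
      have ih' : ∀ y, f (y + Pi.single i ((-(k : ℝ)) * c)) = f y + Pi.single i ((-(k : ℝ)) * c) := by
        intro y; have := ih y; push_cast at this; exact this
      push_cast
      rw [sub_mul, one_mul, Pi.single_sub, add_sub, hinv, ih']
      abel

/-- Globalization of injectivity for the periodic interface map: if `f : ℝ² → ℝ²` is
equivariant under the horizontal periods, has componentwise displacement bounded by
`πLᵢ/2`, and is injective on the enlarged cell `(-3πL₁, 3πL₁) × (-3πL₂, 3πL₂)`,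
then `f` is injective on all of `ℝ²`. -/
theorem stmt_7 (L₁ L₂ : ℝ) (hL₁ : 0 < L₁) (hL₂ : 0 < L₂)
    (f : (Fin 2 → ℝ) → (Fin 2 → ℝ))
    (heq₁ : ∀ y, f (y + Pi.single 0 (2 * π * L₁)) = f y + Pi.single 0 (2 * π * L₁))
    (heq₂ : ∀ y, f (y + Pi.single 1 (2 * π * L₂)) = f y + Pi.single 1 (2 * π * L₂))
    (hb₁ : ∀ y, |f y 0 - y 0| ≤ π * L₁ / 2)
    (hb₂ : ∀ y, |f y 1 - y 1| ≤ π * L₂ / 2)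
    (hinj : Set.InjOn f {y | y 0 ∈ Set.Ioo (-(3 * π * L₁)) (3 * π * L₁) ∧
        y 1 ∈ Set.Ioo (-(3 * π * L₂)) (3 * π * L₂)}) :
    Function.Injective f := by
  have hπ := Real.pi_pos
  intro x y hxy
  set A := 2 * π * L₁ with hA
  set B := 2 * π * L₂ with hB
  have hA0 : 0 < A := by positivity
  have hB0 : 0 < B := by positivity
  set m : ℤ := -round (x 0 / A) with hm
  set n : ℤ := -round (x 1 / B) with hn
  set v : Fin 2 → ℝ := Pi.single 0 ((m : ℝ) * A) + Pi.single 1 ((n : ℝ) * B) with hv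
  -- shift equivariance
  have sh0 := stmt7_aux f 0 A heq₁ m
  have sh1 := stmt7_aux f 1 B heq₂ n
  have hfshift : ∀ z, f (z + v) = f z + v := by
    intro z
    rw [hv, ← add_assoc, sh1, sh0, add_assoc]
  -- bound on shifted x coordinates
  have hx0 : |x 0 + (m : ℝ) * A| ≤ A / 2 := by
    have h1 : |x 0 / A - round (x 0 / A)| ≤ 1 / 2 := abs_sub_round _
    have h2 : x 0 + (m : ℝ) * A = (x 0 / A - round (x 0 / A)) * A := by
      rw [hm, sub_mul, div_mul_cancel₀ _ (ne_of_gt hA0)]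
      push_cast; ring
    rw [h2, abs_mul, abs_of_pos hA0]
    calc |x 0 / A - (round (x 0 / A) : ℝ)| * A ≤ (1 / 2) * A :=
          mul_le_mul_of_nonneg_right h1 hA0.le
      _ = A / 2 := by ring
  have hx1 : |x 1 + (n : ℝ) * B| ≤ B / 2 := by
    have h1 : |x 1 / B - round (x 1 / B)| ≤ 1 / 2 := abs_sub_round _
    have h2 : x 1 + (n : ℝ) * B = (x 1 / B - round (x 1 / B)) * B := by
      rw [hn, sub_mul, div_mul_cancel₀ _ (ne_of_gt hB0)]
      push_cast; ring
    rw [h2, abs_mul, abs_of_pos hB0]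
    calc |x 1 / B - (round (x 1 / B) : ℝ)| * B ≤ (1 / 2) * B :=
          mul_le_mul_of_nonneg_right h1 hB0.le
      _ = B / 2 := by ring
  -- difference bounds from f x = f y
  have hd0 : |y 0 - x 0| ≤ π * L₁ := by
    have h1 := hb₁ x
    have h2 := hb₁ y
    have h3 : f x 0 = f y 0 := by rw [hxy]
    rw [abs_le] at h1 h2 ⊢
    constructor <;> linarith [h1.1, h1.2, h2.1, h2.2]
  have hd1 : |y 1 - x 1| ≤ π * L₂ := by
    have h1 := hb₂ x
    have h2 := hb₂ y
    have h3 : f x 1 = f y 1 := by rw [hxy]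
    rw [abs_le] at h1 h2 ⊢
    constructor <;> linarith [h1.1, h1.2, h2.1, h2.2]
  -- evaluate v
  have hv0 : v 0 = (m : ℝ) * A := by simp [hv]
  have hv1 : v 1 = (n : ℝ) * B := by simp [hv]
  have hA2 : A / 2 = π * L₁ := by rw [hA]; ring
  have hB2 : B / 2 = π * L₂ := by rw [hB]; ring
  have hmemx : (x + v) ∈ {y | y 0 ∈ Set.Ioo (-(3 * π * L₁)) (3 * π * L₁) ∧
      y 1 ∈ Set.Ioo (-(3 * π * L₂)) (3 * π * L₂)} := by
    constructor
    · have : |(x + v) 0| ≤ π * L₁ := by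
        rw [Pi.add_apply, hv0]; rw [hA2] at hx0; exact hx0
      rw [abs_le] at this
      constructor <;> linarith [this.1, this.2, mul_pos hπ hL₁, mul_pos hπ hL₂]
    · have : |(x + v) 1| ≤ π * L₂ := by
        rw [Pi.add_apply, hv1]; rw [hB2] at hx1; exact hx1
      rw [abs_le] at this
      constructor <;> linarith [this.1, this.2, mul_pos hπ hL₁, mul_pos hπ hL₂]
  have hmemy : (y + v) ∈ {y | y 0 ∈ Set.Ioo (-(3 * π * L₁)) (3 * π * L₁) ∧
      y 1 ∈ Set.Ioo (-(3 * π * L₂)) (3 * π * L₂)} := by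
    constructor
    · have h1 : |(y + v) 0| ≤ 2 * (π * L₁) := by
        have : (y + v) 0 = (x 0 + (m : ℝ) * A) + (y 0 - x 0) := by
          rw [Pi.add_apply, hv0]; ring
        rw [this]
        calc |(x 0 + (m : ℝ) * A) + (y 0 - x 0)| ≤ |x 0 + (m : ℝ) * A| + |y 0 - x 0| :=
              abs_add_le _ _
          _ ≤ π * L₁ + π * L₁ := by rw [hA2] at hx0; exact add_le_add hx0 hd0
          _ = 2 * (π * L₁) := by ring
      rw [abs_le] at h1
      constructor <;> linarith [h1.1, h1.2, mul_pos hπ hL₁, mul_pos hπ hL₂]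
    · have h1 : |(y + v) 1| ≤ 2 * (π * L₂) := by
        have : (y + v) 1 = (x 1 + (n : ℝ) * B) + (y 1 - x 1) := by
          rw [Pi.add_apply, hv1]; ring
        rw [this]
        calc |(x 1 + (n : ℝ) * B) + (y 1 - x 1)| ≤ |x 1 + (n : ℝ) * B| + |y 1 - x 1| :=
              abs_add_le _ _
          _ ≤ π * L₂ + π * L₂ := by rw [hB2] at hx1; exact add_le_add hx1 hd1
          _ = 2 * (π * L₂) := by ring
      rw [abs_le] at h1
      constructor <;> linarith [h1.1, h1.2, mul_pos hπ hL₁, mul_pos hπ hL₂]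
  have hfe : f (x + v) = f (y + v) := by rw [hfshift, hfshift, hxy]
  have := hinj hmemx hmemy hfe
  exact add_right_cancel this
end

section
/- Let n ≥ 1 and let f : ℝⁿ → ℝⁿ be continuously differentiable such that at every point x ∈ ℝⁿ the derivative Df(x) is an invertible linear map, and assume the displacement is bounded: there exists C ≥ 0 with |f(x) − x| ≤ C for all x ∈ ℝⁿ. Then f is surjective: f(ℝⁿ) = ℝⁿ. -/
/-- Surjectivity of a `C¹` map of `ℝⁿ` with everywhere invertible derivative and
bounded displacement `|f(x) - x| ≤ C`. -/
theorem stmt_8 (n : ℕ) (hn : 1 ≤ n)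
    (f : EuclideanSpace ℝ (Fin n) → EuclideanSpace ℝ (Fin n))
    (hf : ContDiff ℝ 1 f)
    (hinv : ∀ x, ∃ e : EuclideanSpace ℝ (Fin n) ≃L[ℝ] EuclideanSpace ℝ (Fin n),
      (e : EuclideanSpace ℝ (Fin n) →L[ℝ] EuclideanSpace ℝ (Fin n)) = fderiv ℝ f x)
    (C : ℝ) (hC : 0 ≤ C) (hdisp : ∀ x, ‖f x - x‖ ≤ C) :
    Function.Surjective f := by
  have hcont : Continuous f := hf.continuous
  -- the range is open
  have hopen : IsOpen (Set.range f) := by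
    rw [isOpen_iff_mem_nhds]
    rintro y ⟨x, rfl⟩
    obtain ⟨e, he⟩ := hinv x
    have hsd : HasStrictFDerivAt f (e : EuclideanSpace ℝ (Fin n) →L[ℝ]
        EuclideanSpace ℝ (Fin n)) x := by
      rw [he]
      exact hf.hasStrictFDerivAt one_ne_zero
    have hmap := hsd.map_nhds_eq_of_equiv
    rw [← hmap, Filter.mem_map]
    exact Filter.univ_mem' fun a => Set.mem_range_self a
  -- the range is closed
  have hclosed : IsClosed (Set.range f) := by
    rw [← isSeqClosed_iff_isClosed]
    intro u y hu hlim
    choose x hx using hu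
    obtain ⟨R, hR⟩ : ∃ R, ∀ k, ‖u k‖ ≤ R := by
      obtain ⟨R, hR⟩ := (Metric.isBounded_range_of_tendsto u hlim).subset_closedBall 0
      exact ⟨R, fun k => by simpa using hR (Set.mem_range_self k)⟩
    have hxb : ∀ k, x k ∈ Metric.closedBall (0 : EuclideanSpace ℝ (Fin n)) (R + C) := by
      intro k
      have h1 : ‖x k - f (x k)‖ ≤ C := by
        rw [norm_sub_rev]; exact hdisp (x k)
      have h2 : ‖x k‖ ≤ ‖f (x k)‖ + C := by
        calc ‖x k‖ = ‖f (x k) + (x k - f (x k))‖ := by rw [add_sub_cancel]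
          _ ≤ ‖f (x k)‖ + ‖x k - f (x k)‖ := norm_add_le _ _
          _ ≤ ‖f (x k)‖ + C := by linarith
      rw [hx k] at h2
      simpa [Metric.mem_closedBall, dist_eq_norm] using h2.trans (by linarith [hR k])
    obtain ⟨z, -, φ, hφ, hz⟩ := tendsto_subseq_of_bounded Metric.isBounded_closedBall hxb
    refine ⟨z, ?_⟩
    have h1 : Filter.Tendsto (fun k => f (x (φ k))) Filter.atTop (nhds (f z)) :=
      (hcont.tendsto z).comp hz
    have h2 : Filter.Tendsto (fun k => f (x (φ k))) Filter.atTop (nhds y) := by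
      simpa [hx, Function.comp_def] using hlim.comp hφ.tendsto_atTop
    exact tendsto_nhds_unique h1 h2
  have : Set.range f = Set.univ := by
    have hne : (Set.range f).Nonempty := ⟨f 0, Set.mem_range_self 0⟩
    rcases isClopen_iff.mp ⟨hclosed, hopen⟩ with h | h
    · exact absurd h (Set.nonempty_iff_ne_empty.mp hne)
    · exact h
  exact Set.range_eq_univ.mp this
end

section
/- Let n ≥ 1 and let f : ℝⁿ → ℝⁿ be continuously differentiable and injective, such that at every point x ∈ ℝⁿ the derivative Df(x) is an invertible linear map, and such that there exists C ≥ 0 with |f(x) − x| ≤ C for all x ∈ ℝⁿ. Then f is a bijection of ℝⁿ onto ℝⁿ, its inverse g := f⁻¹ is continuously differentiable, and Dg(f(x)) = (Df(x))⁻¹ for all x ∈ ℝⁿ. -/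
/-- Global `C¹`-diffeomorphism: an injective `C¹` map of `ℝⁿ` with everywhere invertible
derivative and bounded displacement is a bijection of `ℝⁿ`, its inverse `g` is `C¹`, and
`Dg(f(x)) = (Df(x))⁻¹` for all `x` (expressed via the two composition identities). -/
theorem stmt_9 (n : ℕ) (hn : 1 ≤ n)
    (f : EuclideanSpace ℝ (Fin n) → EuclideanSpace ℝ (Fin n))
    (hf : ContDiff ℝ 1 f) (hfinj : Function.Injective f)
    (hinv : ∀ x, ∃ e : EuclideanSpace ℝ (Fin n) ≃L[ℝ] EuclideanSpace ℝ (Fin n),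
      (e : EuclideanSpace ℝ (Fin n) →L[ℝ] EuclideanSpace ℝ (Fin n)) = fderiv ℝ f x)
    (C : ℝ) (hC : 0 ≤ C) (hdisp : ∀ x, ‖f x - x‖ ≤ C) :
    Function.Bijective f ∧
      ∃ g : EuclideanSpace ℝ (Fin n) → EuclideanSpace ℝ (Fin n),
        (∀ x, g (f x) = x) ∧ (∀ y, f (g y) = y) ∧ ContDiff ℝ 1 g ∧
        ∀ x,
          (fderiv ℝ g (f x)).comp (fderiv ℝ f x) =
            ContinuousLinearMap.id ℝ (EuclideanSpace ℝ (Fin n)) ∧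
          (fderiv ℝ f x).comp (fderiv ℝ g (f x)) =
            ContinuousLinearMap.id ℝ (EuclideanSpace ℝ (Fin n)) := by
  have hcont : Continuous f := hf.continuous
  -- strict differentiability with invertible derivative at every point
  have hstrict : ∀ x, ∃ e : EuclideanSpace ℝ (Fin n) ≃L[ℝ] EuclideanSpace ℝ (Fin n),
      HasStrictFDerivAt f (e : EuclideanSpace ℝ (Fin n) →L[ℝ] EuclideanSpace ℝ (Fin n)) x := by
    intro x
    obtain ⟨e, he⟩ := hinv x
    refine ⟨e, ?_⟩
    rw [he]
    exact hf.contDiffAt.hasStrictFDerivAt one_ne_zero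
  -- range is open
  have hopen : IsOpen (Set.range f) := by
    rw [isOpen_iff_mem_nhds]
    rintro y ⟨x, rfl⟩
    obtain ⟨e, he⟩ := hstrict x
    rw [← he.map_nhds_eq_of_equiv]
    exact Filter.mem_map.2 (by rw [Set.preimage_range]; exact Filter.univ_mem)
  -- range is closed
  have hclosed : IsClosed (Set.range f) := by
    rw [← isSeqClosed_iff_isClosed]
    intro u y hu hlim
    choose x hx using hu
    obtain ⟨R, hR⟩ :=
      (Metric.isBounded_range_of_tendsto u hlim).exists_norm_le
    have hxbdd : ∀ k, x k ∈ Metric.closedBall (0 : EuclideanSpace ℝ (Fin n)) (C + R) := by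
      intro k
      rw [Metric.mem_closedBall, dist_zero_right]
      have hfk : ‖f (x k)‖ ≤ R := by rw [hx k]; exact hR _ ⟨k, rfl⟩
      calc ‖x k‖ = ‖f (x k) - (f (x k) - x k)‖ := by rw [sub_sub_cancel]
        _ ≤ ‖f (x k)‖ + ‖f (x k) - x k‖ := norm_sub_le _ _
        _ ≤ R + C := add_le_add hfk (hdisp _)
        _ = C + R := by ring
    obtain ⟨a, -, φ, hφ, hφlim⟩ :=
      tendsto_subseq_of_bounded (Metric.isBounded_closedBall
        (x := (0 : EuclideanSpace ℝ (Fin n))) (r := C + R)) hxbdd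
    refine ⟨a, ?_⟩
    have h1 : Filter.Tendsto (fun k => f (x (φ k))) Filter.atTop (nhds (f a)) :=
      (hcont.continuousAt).tendsto.comp hφlim
    have h2 : Filter.Tendsto (fun k => f (x (φ k))) Filter.atTop (nhds y) := by
      simpa [hx, Function.comp_def] using hlim.comp hφ.tendsto_atTop
    exact tendsto_nhds_unique h1 h2
  -- surjectivity
  have hsurj : Function.Surjective f := by
    have : Set.range f = Set.univ :=
      (isClopen_iff.mp ⟨hclosed, hopen⟩).resolve_left
        (Set.Nonempty.ne_empty ⟨f 0, Set.mem_range_self 0⟩)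
    exact Set.range_eq_univ.mp this
  have hbij : Function.Bijective f := ⟨hfinj, hsurj⟩
  set E := Equiv.ofBijective f hbij with hE
  set g : EuclideanSpace ℝ (Fin n) → EuclideanSpace ℝ (Fin n) := (fun y => E.symm y) with hg
  have hgl : ∀ x, g (f x) = x := fun x => E.symm_apply_apply x
  have hgr : ∀ y, f (g y) = y := fun y => E.apply_symm_apply y
  -- C¹ smoothness of g
  have hgc1 : ContDiff ℝ 1 g := by
    rw [contDiff_iff_contDiffAt]
    intro y
    obtain ⟨e, he⟩ := hstrict (g y)
    have hfx : f (g y) = y := hgr y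
    have hca : ContDiffAt ℝ 1 f (g y) := hf.contDiffAt
    have hli := hca.to_localInverse (f' := e) he.hasFDerivAt one_ne_zero
    rw [hfx] at hli
    refine hli.congr_of_eventuallyEq ?_
    have := (hca.hasStrictFDerivAt' he.hasFDerivAt one_ne_zero).eventually_right_inverse
    rw [hfx] at this
    filter_upwards [this] with z hz
    calc g z = g (f ((hca.localInverse he.hasFDerivAt one_ne_zero) z)) := congrArg g hz.symm
      _ = _ := hgl _
  refine ⟨hbij, g, hgl, hgr, hgc1, fun x => ?_⟩
  obtain ⟨e, he⟩ := hstrict x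
  have hgd : HasStrictFDerivAt g
      (e.symm : EuclideanSpace ℝ (Fin n) →L[ℝ] EuclideanSpace ℝ (Fin n)) (f x) :=
    he.to_local_left_inverse (Filter.Eventually.of_forall hgl)
  have h1 : fderiv ℝ g (f x) = (e.symm : EuclideanSpace ℝ (Fin n) →L[ℝ] EuclideanSpace ℝ (Fin n)) :=
    hgd.hasFDerivAt.fderiv
  have h2 : fderiv ℝ f x = (e : EuclideanSpace ℝ (Fin n) →L[ℝ] EuclideanSpace ℝ (Fin n)) :=
    he.hasFDerivAt.fderiv
  rw [h1, h2]
  constructor <;> ext z <;> simp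
end

section
/- Let n ≥ 1, let S ⊆ ℝⁿ be a closed set, and let f : S → S be a continuous bijection of S onto S such that there exists C ≥ 0 with |f(x) − x| ≤ C for all x ∈ S. Then the inverse map g : S → S (characterized by g(f(x)) = x for all x ∈ S) is continuous; that is, f is a homeomorphism of S onto itself. -/
/-- Continuity of the inverse: a continuous bijection `f` of a closed set `S ⊆ ℝⁿ` onto
itself with bounded displacement `|f(x) - x| ≤ C` on `S` has a continuous inverse on `S`;
i.e. `f` is a homeomorphism of `S` onto itself. -/
theorem stmt_10 (n : ℕ) (hn : 1 ≤ n)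
    (S : Set (EuclideanSpace ℝ (Fin n))) (hS : IsClosed S)
    (f : EuclideanSpace ℝ (Fin n) → EuclideanSpace ℝ (Fin n))
    (hmaps : Set.MapsTo f S S) (hcont : ContinuousOn f S) (hinj : Set.InjOn f S)
    (hsurj : f '' S = S)
    (C : ℝ) (hC : 0 ≤ C) (hdisp : ∀ x ∈ S, ‖f x - x‖ ≤ C) :
    ∃ g : EuclideanSpace ℝ (Fin n) → EuclideanSpace ℝ (Fin n),
      Set.MapsTo g S S ∧ (∀ x ∈ S, g (f x) = x) ∧ (∀ y ∈ S, f (g y) = y) ∧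
      ContinuousOn g S := by
  classical
  set g := Function.invFunOn f S with hg
  have hleft : ∀ x ∈ S, g (f x) = x := fun x hx => hinj.leftInvOn_invFunOn hx
  have hsurjOn : Set.SurjOn f S S := by rw [Set.SurjOn, hsurj]
  have hright : ∀ y ∈ S, f (g y) = y := fun y hy =>
    Function.invFunOn_eq (hsurjOn hy)
  have hgmaps : Set.MapsTo g S S := fun y hy => by
    obtain ⟨x, hx, hfx⟩ := hsurjOn hy
    rw [← hfx, hleft x hx]; exact hx
  refine ⟨g, hgmaps, hleft, hright, ?_⟩
  intro y hy
  -- The compact set K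
  set K := S ∩ Metric.closedBall y (C + 1) with hK
  have hKcomp : IsCompact K := (isCompact_closedBall y (C + 1)).inter_left hS
  have hKS : K ⊆ S := Set.inter_subset_left
  -- key inclusion: points of S near y are in f '' K
  have hincl : S ∩ Metric.ball y 1 ⊆ f '' K := by
    rintro z ⟨hzS, hzb⟩
    obtain ⟨x, hx, hfx⟩ := hsurjOn hzS
    refine ⟨x, ⟨hx, ?_⟩, hfx⟩
    have h1 : dist x z ≤ C := by
      rw [dist_eq_norm, ← hfx]
      simpa [norm_sub_rev] using hdisp x hx
    have h2 : dist z y < 1 := hzb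
    calc dist x y ≤ dist x z + dist z y := dist_triangle x z y
      _ ≤ C + 1 := by linarith
  -- y itself lies in f '' K
  have hyK : y ∈ f '' K := by
    refine ⟨g y, ⟨hgmaps hy, ?_⟩, hright y hy⟩
    have : dist (g y) y ≤ C := by
      rw [dist_eq_norm]
      have := hdisp (g y) (hgmaps hy)
      rw [hright y hy] at this; rwa [norm_sub_rev]
    exact Metric.mem_closedBall.mpr (by linarith)
  -- Build a homeomorphism from K to f '' K
  haveI : CompactSpace K := isCompact_iff_compactSpace.mp hKcomp
  let e : K ≃ (f '' K : Set _) := Equiv.Set.imageOfInjOn f K (hinj.mono hKS)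
  have hecont : Continuous e := by
    have : Continuous (K.restrict f) :=
      continuousOn_iff_continuous_restrict.mp (hcont.mono hKS)
    exact this.subtype_mk _
  let h : K ≃ₜ (f '' K : Set _) := Continuous.homeoOfEquivCompactToT2 hecont
  -- g agrees with the inverse homeomorphism on f '' K
  have hgood : ∀ z : (f '' K : Set _), g z.1 = (h.symm z).1 := by
    rintro ⟨z, hz⟩
    obtain ⟨x, hxK, hfx⟩ := hz
    have hx : g z = x := by rw [← hfx]; exact hleft x (hKS hxK)
    have : h.symm ⟨z, ⟨x, hxK, hfx⟩⟩ = ⟨x, hxK⟩ := by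
      apply h.injective
      simp only [Homeomorph.apply_symm_apply]
      exact Subtype.ext hfx.symm
    rw [this, hx]
  have hgcontOn : ContinuousOn g (f '' K) := by
    rw [continuousOn_iff_continuous_restrict]
    have : (f '' K).domRestrict g = fun z => (h.symm z).1 := funext hgood
    rw [this]
    exact continuous_subtype_val.comp h.symm.continuous
  -- conclude ContinuousWithinAt g S y
  have hmem : f '' K ∈ nhdsWithin y S := by
    refine Filter.mem_of_superset ?_ hincl
    exact Filter.inter_mem self_mem_nhdsWithin
      (nhdsWithin_le_nhds (Metric.ball_mem_nhds y one_pos))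
  exact (hgcontOn y hyK).mono_of_mem_nhdsWithin hmem
end

section
/- Let Λ > 0, c₁, c₂ ≥ 0, T > 0 and 0 < δ ≤ 1. Let f : [0, T] → ℝ be differentiable with f(t) ≥ 0 and f(0) ≤ c₁δ⁴, and let g : [0, T] → ℝ be continuous with g(t) ≥ 0, and assume that for every t ∈ [0, T]: f′(t) + g(t) ≤ 2Λ·( f(t) + ∫₀ᵗ g(s) ds ) + c₂·δ³·e^{3Λt}. Then for every t ∈ [0, T]: f(t) + ∫₀ᵗ g(s) ds ≤ (c₁ + c₂/Λ)·δ³·e^{3Λt}. -/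
open MeasureTheory intervalIntegral

/-- Differential-inequality argument of the nonlinear error estimates: if
`f′(t) + g(t) ≤ 2Λ(f(t) + ∫₀ᵗ g) + c₂δ³e^{3Λt}` with `f ≥ 0`, `f(0) ≤ c₁δ⁴`, `g ≥ 0`
continuous, `0 < δ ≤ 1`, then `f(t) + ∫₀ᵗ g ≤ (c₁ + c₂/Λ)δ³e^{3Λt}` on `[0, T]`. -/
theorem stmt_15 (Λ c₁ c₂ T δ : ℝ) (hΛ : 0 < Λ) (hc₁ : 0 ≤ c₁) (hc₂ : 0 ≤ c₂)
    (hT : 0 < T) (hδ₀ : 0 < δ) (hδ₁ : δ ≤ 1)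
    (f f' g : ℝ → ℝ)
    (hf' : ∀ t ∈ Set.Icc 0 T, HasDerivAt f (f' t) t)
    (hfnn : ∀ t ∈ Set.Icc 0 T, 0 ≤ f t)
    (hf0 : f 0 ≤ c₁ * δ ^ 4)
    (hg : ContinuousOn g (Set.Icc 0 T))
    (hgnn : ∀ t ∈ Set.Icc 0 T, 0 ≤ g t)
    (hineq : ∀ t ∈ Set.Icc 0 T,
      f' t + g t ≤ 2 * Λ * (f t + ∫ s in (0 : ℝ)..t, g s) +
        c₂ * δ ^ 3 * Real.exp (3 * Λ * t)) :
    ∀ t ∈ Set.Icc 0 T,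
      f t + (∫ s in (0 : ℝ)..t, g s) ≤ (c₁ + c₂ / Λ) * δ ^ 3 * Real.exp (3 * Λ * t) := by
  have hT0 : (0 : ℝ) ≤ T := hT.le
  set K : ℝ := c₁ + c₂ / Λ with hK
  have hKc₁ : c₁ ≤ K := by
    have : 0 ≤ c₂ / Λ := div_nonneg hc₂ hΛ.le
    rw [hK]; linarith
  set G : ℝ → ℝ := fun t => ∫ s in (0 : ℝ)..t, g s with hGdef
  have hGcont : ContinuousOn G (Set.Icc 0 T) := by
    have h := intervalIntegral.continuousOn_primitive_interval
      (f := g) (a := (0 : ℝ)) (b := T) (μ := volume)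
      (by simpa [Set.uIcc_of_le hT0] using hg.integrableOn_Icc)
    simpa [Set.uIcc_of_le hT0, hGdef] using h
  have hfc : ContinuousOn f (Set.Icc 0 T) := fun t ht =>
    ((hf' t ht).continuousAt).continuousWithinAt
  set φ : ℝ → ℝ :=
    fun t => (f t + G t - K * δ ^ 3 * Real.exp (3 * Λ * t)) * Real.exp (-(2 * Λ * t)) with hφdef
  have hφc : ContinuousOn φ (Set.Icc 0 T) := by
    apply ContinuousOn.mul
    · exact (hfc.add hGcont).sub (Continuous.continuousOn (by continuity))
    · exact Continuous.continuousOn (by continuity)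
  have hderiv : ∀ t ∈ Set.Ioo (0 : ℝ) T, HasDerivAt φ
      ((f' t + g t - K * δ ^ 3 * (Real.exp (3 * Λ * t) * (3 * Λ))) * Real.exp (-(2 * Λ * t))
        + (f t + G t - K * δ ^ 3 * Real.exp (3 * Λ * t))
          * (Real.exp (-(2 * Λ * t)) * (-(2 * Λ)))) t := by
    intro t ht
    have htI : t ∈ Set.Icc 0 T := Set.Ioo_subset_Icc_self ht
    have hInt : IntervalIntegrable g volume 0 t := by
      apply ContinuousOn.intervalIntegrable
      apply hg.mono
      rw [Set.uIcc_of_le ht.1.le]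
      exact Set.Icc_subset_Icc le_rfl ht.2.le
    have hca : ContinuousAt g t := hg.continuousAt (Icc_mem_nhds ht.1 ht.2)
    have hsm : StronglyMeasurableAtFilter g (nhds t) volume :=
      (hg.mono Set.Ioo_subset_Icc_self).stronglyMeasurableAtFilter isOpen_Ioo t ht
    have hGd : HasDerivAt G (g t) t :=
      intervalIntegral.integral_hasDerivAt_right hInt hsm hca
    have he3 : HasDerivAt (fun t : ℝ => Real.exp (3 * Λ * t))
        (Real.exp (3 * Λ * t) * (3 * Λ)) t := by
      have h1 : HasDerivAt (fun t : ℝ => 3 * Λ * t) (3 * Λ) t := by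
        simpa using (hasDerivAt_id t).const_mul (3 * Λ)
      exact h1.exp
    have he2 : HasDerivAt (fun t : ℝ => Real.exp (-(2 * Λ * t)))
        (Real.exp (-(2 * Λ * t)) * (-(2 * Λ))) t := by
      have h1 : HasDerivAt (fun t : ℝ => -(2 * Λ * t)) (-(2 * Λ)) t := by
        simpa [Pi.neg_def] using ((hasDerivAt_id t).const_mul (2 * Λ)).neg
      exact h1.exp
    exact (((hf' t htI).add hGd).sub (he3.const_mul (K * δ ^ 3))).mul he2
  have hanti : AntitoneOn φ (Set.Icc 0 T) := by
    apply antitoneOn_of_deriv_nonpos (convex_Icc 0 T) hφc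
    · intro t ht
      rw [interior_Icc] at ht
      exact (hderiv t ht).differentiableAt.differentiableWithinAt
    · intro t ht
      rw [interior_Icc] at ht
      rw [(hderiv t ht).deriv]
      have htI : t ∈ Set.Icc 0 T := Set.Ioo_subset_Icc_self ht
      have h1 := hineq t htI
      have hE2 : 0 < Real.exp (-(2 * Λ * t)) := Real.exp_pos _
      have hE3 : 0 < Real.exp (3 * Λ * t) := Real.exp_pos _
      have hKc : c₂ * δ ^ 3 ≤ Λ * (K * δ ^ 3) := by
        have : Λ * K = Λ * c₁ + c₂ := by rw [hK]; field_simp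
        nlinarith [pow_pos hδ₀ 3, mul_nonneg hΛ.le hc₁]
      have hbr : f' t + g t - K * δ ^ 3 * (Real.exp (3 * Λ * t) * (3 * Λ))
          + (f t + G t - K * δ ^ 3 * Real.exp (3 * Λ * t)) * (-(2 * Λ)) ≤ 0 := by
        simp only [hGdef] at h1 ⊢
        nlinarith [mul_le_mul_of_nonneg_right hKc hE3.le]
      calc (f' t + g t - K * δ ^ 3 * (Real.exp (3 * Λ * t) * (3 * Λ))) * Real.exp (-(2 * Λ * t))
            + (f t + G t - K * δ ^ 3 * Real.exp (3 * Λ * t))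
              * (Real.exp (-(2 * Λ * t)) * (-(2 * Λ)))
          = (f' t + g t - K * δ ^ 3 * (Real.exp (3 * Λ * t) * (3 * Λ))
              + (f t + G t - K * δ ^ 3 * Real.exp (3 * Λ * t)) * (-(2 * Λ)))
            * Real.exp (-(2 * Λ * t)) := by ring
        _ ≤ 0 := mul_nonpos_of_nonpos_of_nonneg hbr hE2.le
  intro t ht
  have h0I : (0 : ℝ) ∈ Set.Icc (0 : ℝ) T := ⟨le_rfl, hT0⟩
  have hφt : φ t ≤ φ 0 := hanti h0I ht ht.1
  have hφ0 : φ 0 ≤ 0 := by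
    have hG0 : G 0 = 0 := by simp [hGdef]
    have hδ43 : δ ^ 4 ≤ δ ^ 3 := pow_le_pow_of_le_one hδ₀.le hδ₁ (by norm_num)
    have : f 0 ≤ K * δ ^ 3 := by
      calc f 0 ≤ c₁ * δ ^ 4 := hf0
        _ ≤ c₁ * δ ^ 3 := mul_le_mul_of_nonneg_left hδ43 hc₁
        _ ≤ K * δ ^ 3 := mul_le_mul_of_nonneg_right hKc₁ (by positivity)
    simp only [hφdef, hG0, mul_zero, neg_zero, Real.exp_zero, mul_one, add_zero]
    linarith
  have hE2 : 0 < Real.exp (-(2 * Λ * t)) := Real.exp_pos _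
  have : (f t + G t - K * δ ^ 3 * Real.exp (3 * Λ * t)) * Real.exp (-(2 * Λ * t)) ≤ 0 :=
    hφt.trans hφ0
  have hle : f t + G t - K * δ ^ 3 * Real.exp (3 * Λ * t) ≤ 0 := by
    by_contra h
    push_neg at h
    nlinarith
  simpa [hGdef, hK] using hle
end
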